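/- Let E₂, E₃ be Banach spaces and F: E₂ → E₃ a C³ map whose second derivative D²F is C¹ with bounded D²F and D³F, and whose first derivative DF is bounded on the image of U. Let X̄ ∈ C^α with rough path lift 𝐗 = (X̄, 𝕏) ∈ 𝒞^α([0,T], E₁), α ∈ (1/3,1/2), and let (U,U') ∈ 𝒟^{2α}_{X̄}([0,T], E₂) satisfy U_t = Γ_t + ∫_0^t U'_s d𝐗_s with Γ ∈ C^{2α}([0,T], E₂) and (U',U'') ∈ 𝒟^{2α}_{X̄}([0,T], L(E₁,E₂)). Then F(U_t) = F(U_0) + ∫_0^t DF(U_s) U'_s d𝐗_s + ∫_0^t DF(U_s) dΓ_s + (1/2)∫_0^t D²F(U_s)(U'_s, U'_s) d[𝐗]_s, where [𝐗]_t = δX̄_{0,t} ⊗ δX̄_{0,t} − 2 Sym(𝕏_{0,t}) and the last two integrals are Young integrals. -/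

import Mathlib

open Set Finset Filter Topology

private lemma sum_range_two_mul {M : Type*} [AddCommMonoid M] (n : ℕ) (f : ℕ → M) :
    ∑ i ∈ Finset.range (2 * n), f i = ∑ i ∈ Finset.range n, (f (2 * i) + f (2 * i + 1)) := by
  induction n with
  | zero => simp
  | succ n ih =>
    rw [Finset.sum_range_succ, ← ih, Nat.mul_succ,
      show 2 * n + 2 = (2 * n + 1) + 1 from rfl, Finset.sum_range_succ, Finset.sum_range_succ]
    abel

set_option maxHeartbeats 1000000 in
private theorem sewing {E : Type*} [NormedAddCommGroup E] [NormedSpace ℝ E] [CompleteSpace E]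
    (T θ Cδ : ℝ) (hT : 0 < T) (hθ : 1 < θ) (hC : 0 ≤ Cδ) (A : ℝ → ℝ → E)
    (hδ : ∀ s u t : ℝ, 0 ≤ s → s ≤ u → u ≤ t → t ≤ T →
      ‖A s t - A s u - A u t‖ ≤ Cδ * (t - s) ^ θ) :
    ∃ g : ℝ → E, ∃ K : ℝ, 0 ≤ K ∧ ∀ s t : ℝ, 0 ≤ s → s ≤ t → t ≤ T →
      ‖g t - g s - A s t‖ ≤ K * (t - s) ^ θ := by
  classical
  haveI : Nonempty E := ⟨0⟩
  have hθ0 : (0:ℝ) < θ := by linarith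
  set r : ℝ := (2:ℝ) ^ (1 - θ) with hrdef
  have hr0 : 0 < r := Real.rpow_pos_of_pos two_pos _
  have hr1 : r < 1 := Real.rpow_lt_one_of_one_lt_of_neg one_lt_two (by linarith)
  -- A vanishes on the diagonal
  have hA0 : ∀ t : ℝ, 0 ≤ t → t ≤ T → A t t = 0 := by
    intro t h0 h1
    have h := hδ t t t h0 le_rfl le_rfl h1
    have e : A t t - A t t - A t t = -(A t t) := by abel
    rw [e, norm_neg, sub_self, Real.zero_rpow (by linarith : θ ≠ 0), mul_zero] at h
    exact norm_le_zero_iff.mp h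
  -- dyadic points
  set τ : ℕ → ℕ → ℝ := fun n k => (k : ℝ) * T / 2 ^ n with hτdef
  have hτnn : ∀ n k, 0 ≤ τ n k := by intro n k; positivity
  have hτmono : ∀ n, Monotone (τ n) := by
    intro n k l hkl
    have : (k:ℝ) ≤ l := by exact_mod_cast hkl
    apply div_le_div_of_nonneg_right ?_ (by positivity)
    · exact mul_le_mul_of_nonneg_right this hT.le
  have hτ0 : ∀ n, τ n 0 = 0 := by intro n; simp [hτdef]
  have hτT : ∀ n, τ n (2^n) = T := by
    intro n
    simp only [hτdef]
    push_cast
    field_simp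
  have hτdouble : ∀ n k, τ (n+1) (2*k) = τ n k := by
    intro n k
    simp only [hτdef]
    push_cast
    field_simp
    ring
  have hτstep : ∀ n k, τ n (k+1) - τ n k = T / 2 ^ n := by
    intro n k
    simp only [hτdef]
    push_cast
    field_simp
    ring
  -- helper: min difference
  have hminsub : ∀ u x y : ℝ, y ≤ x → min u x - min u y ≤ x - y := by
    intro u x y hyx
    rcases le_total u y with h | h
    · rw [min_eq_left h, min_eq_left (h.trans hyx)]; linarith
    · rw [min_eq_right h]
      have := min_le_left u x
      linarith [min_le_right u x, min_le_left u x]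
  -- the dyadic Riemann sums
  set S : ℕ → ℝ → E := fun n t => ∑ k ∈ Finset.range (2^n),
    A (min t (τ n k)) (min t (τ n (k+1))) with hSdef
  set D : ℕ → ℕ → ℝ → E := fun n k u =>
    A (min u (τ (n+1) (2*k))) (min u (τ (n+1) (2*k+1)))
      + A (min u (τ (n+1) (2*k+1))) (min u (τ (n+1) (2*k+2)))
      - A (min u (τ (n+1) (2*k))) (min u (τ (n+1) (2*k+2))) with hDdef
  have href : ∀ n u, S (n+1) u - S n u = ∑ k ∈ Finset.range (2^n), D n k u := by
    intro n u
    have e1 : S (n+1) u = ∑ k ∈ Finset.range (2^n),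
        (A (min u (τ (n+1) (2*k))) (min u (τ (n+1) (2*k+1)))
          + A (min u (τ (n+1) (2*k+1))) (min u (τ (n+1) (2*k+2)))) := by
      rw [hSdef]
      simp only
      rw [show (2:ℕ)^(n+1) = 2 * 2^n by rw [pow_succ]; ring,
        sum_range_two_mul (2^n) (fun k => A (min u (τ (n+1) k)) (min u (τ (n+1) (k+1))))]
    have e2 : S n u = ∑ k ∈ Finset.range (2^n),
        A (min u (τ (n+1) (2*k))) (min u (τ (n+1) (2*k+2))) := by
      rw [hSdef]
      simp only
      congr 1
      funext k
      rw [hτdouble n k, show 2*k+2 = 2*(k+1) by ring, hτdouble n (k+1)]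
    rw [e1, e2, ← Finset.sum_sub_distrib]
  -- per-term bound
  have hDb : ∀ n k (u : ℝ), 0 ≤ u → u ≤ T → ‖D n k u‖ ≤ Cδ * (T / 2^n) ^ θ := by
    intro n k u hu0 huT
    set a := min u (τ (n+1) (2*k)) with ha
    set b := min u (τ (n+1) (2*k+1)) with hb
    set c := min u (τ (n+1) (2*k+2)) with hc
    have hab : a ≤ b := min_le_min le_rfl (hτmono (n+1) (by omega))
    have hbc : b ≤ c := min_le_min le_rfl (hτmono (n+1) (by omega))
    have h0a : 0 ≤ a := le_min hu0 (hτnn _ _)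
    have hcT : c ≤ T := le_trans (min_le_left _ _) huT
    have hca : c - a ≤ T / 2^n := by
      have h1 : c - a ≤ τ (n+1) (2*k+2) - τ (n+1) (2*k) :=
        hminsub u _ _ (hτmono (n+1) (by omega))
      have h2 : τ (n+1) (2*k+2) - τ (n+1) (2*k) = T / 2^n := by
        have e1 := hτstep (n+1) (2*k)
        have e2 := hτstep (n+1) (2*k+1)
        have : τ (n+1) (2*k+2) - τ (n+1) (2*k) = T / 2^(n+1) + T / 2^(n+1) := by
          have : (2*k+1)+1 = 2*k+2 := by ring
          rw [← this]
          linarith [e1, e2]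
        rw [this, pow_succ]
        field_simp
        ring
      linarith
    have hd := hδ a b c h0a hab hbc hcT
    have : ‖D n k u‖ = ‖A a c - A a b - A b c‖ := by
      rw [hDdef]
      simp only
      rw [show A a b + A b c - A a c = -(A a c - A a b - A b c) by abel, norm_neg]
    rw [this]
    refine hd.trans (mul_le_mul_of_nonneg_left ?_ hC)
    exact Real.rpow_le_rpow (by linarith) hca hθ0.le
  -- geometric identity
  have hgeom0 : ∀ n : ℕ, ((2:ℝ)^n) * (T / 2^n) ^ θ = T ^ θ * r ^ n := by
    intro n
    have h2n : ((2:ℝ)^n) = (2:ℝ) ^ (n:ℝ) := by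
      rw [Real.rpow_natCast]
    rw [Real.div_rpow hT.le (by positivity)]
    have e1 : ((2:ℝ)^n) ^ θ = (2:ℝ) ^ ((n:ℝ) * θ) := by
      rw [h2n, ← Real.rpow_mul (by norm_num)]
    have e2 : r ^ n = (2:ℝ) ^ ((1 - θ) * (n:ℝ)) := by
      rw [hrdef, ← Real.rpow_natCast ((2:ℝ)^(1-θ)) n, ← Real.rpow_mul (by norm_num)]
    rw [e1, e2, h2n]
    rw [show (1 - θ) * (n:ℝ) = (n:ℝ) - (n:ℝ) * θ by ring, Real.rpow_sub two_pos]
    have hpos : (0:ℝ) < (2:ℝ) ^ ((n:ℝ) * θ) := Real.rpow_pos_of_pos two_pos _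
    field_simp
  -- global level bound
  have hglob : ∀ (n : ℕ) (t : ℝ), 0 ≤ t → t ≤ T →
      ‖S (n+1) t - S n t‖ ≤ (Cδ * T ^ θ) * r ^ n := by
    intro n t h0 h1
    rw [href n t]
    calc ‖∑ k ∈ Finset.range (2^n), D n k t‖
        ≤ ∑ k ∈ Finset.range (2^n), ‖D n k t‖ := norm_sum_le _ _
      _ ≤ ∑ _k ∈ Finset.range (2^n), Cδ * (T / 2^n) ^ θ :=
          Finset.sum_le_sum (fun k _ => hDb n k t h0 h1)
      _ = (2^n : ℝ) * (Cδ * (T / 2^n) ^ θ) := by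
          rw [Finset.sum_const, Finset.card_range, nsmul_eq_mul]; push_cast; ring
      _ = (Cδ * T ^ θ) * r ^ n := by
          rw [show (2^n : ℝ) * (Cδ * (T / 2^n) ^ θ) = Cδ * ((2^n:ℝ) * (T / 2^n) ^ θ) by ring,
            hgeom0 n]
          ring
  -- window counting
  have hcount : ∀ (n : ℕ) (a b : ℝ), 0 ≤ a → a ≤ b →
      ((((Finset.range (2^n)).filter (fun k => τ n k < b ∧ a < τ n (k+1))).card : ℝ))
        ≤ (b - a) * 2^n / T + 2 := by
    intro n a b ha hab
    set W := (Finset.range (2^n)).filter (fun k => τ n k < b ∧ a < τ n (k+1)) with hW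
    set K₀ := ⌊a * 2^n / T⌋₊ with hK₀
    set K₁ := ⌈b * 2^n / T⌉₊ with hK₁
    have hsub : W ⊆ Finset.Ico K₀ K₁ := by
      intro k hk
      rw [hW, Finset.mem_filter, Finset.mem_range] at hk
      obtain ⟨hk2n, hkb, hak⟩ := hk
      simp only [hτdef] at hkb hak
      push_cast at hkb hak
      rw [Finset.mem_Ico]
      constructor
      · have h1 : a * 2^n / T < (k:ℝ) + 1 := by
          rw [div_lt_iff₀ hT]
          calc a * 2^n < (((k:ℝ)+1) * T / 2^n) * 2^n := by
                exact mul_lt_mul_of_pos_right hak (by positivity)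
            _ = ((k:ℝ)+1)*T := by field_simp
        have h2 : (K₀ : ℝ) ≤ a * 2^n / T := Nat.floor_le (by positivity)
        have h3 : (K₀:ℝ) < (k:ℝ) + 1 := lt_of_le_of_lt h2 h1
        have h4 : K₀ < k + 1 := by exact_mod_cast h3
        omega
      · have h1 : (k:ℝ) < b * 2^n / T := by
          rw [lt_div_iff₀ hT]
          calc (k:ℝ) * T = ((k:ℝ)*T/2^n) * 2^n := by field_simp
            _ < b * 2^n := mul_lt_mul_of_pos_right hkb (by positivity)
        have h2 : b * 2^n / T ≤ (K₁:ℝ) := Nat.le_ceil _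
        exact_mod_cast h1.trans_le h2
    have hcard := Finset.card_le_card hsub
    rw [Nat.card_Ico] at hcard
    have hba : (0:ℝ) ≤ (b-a) * 2^n / T := by
      have hba0 : (0:ℝ) ≤ b - a := by linarith
      exact div_nonneg (mul_nonneg hba0 (by positivity)) hT.le
    rcases le_or_gt K₁ K₀ with h | h
    · have h0 : W.card = 0 := by omega
      rw [h0]
      push_cast
      linarith
    · have h3 : (W.card : ℝ) ≤ (K₁:ℝ) - (K₀:ℝ) := by
        rw [← Nat.cast_sub h.le]
        exact_mod_cast hcard
      have hK₁' : (K₁:ℝ) < b * 2^n / T + 1 := Nat.ceil_lt_add_one (by have hb0 : (0:ℝ) ≤ b := ha.trans hab; positivity)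
      have hK₀' : a * 2^n / T - 1 < (K₀:ℝ) := by
        have := Nat.lt_floor_add_one (a * 2^n / T); linarith
      have he : (b * 2^n / T) - (a * 2^n / T) = (b - a) * 2^n / T := by ring
      linarith
  -- local per-level bound
  have hlocal : ∀ (n : ℕ) (s t : ℝ), 0 ≤ s → s ≤ t → t ≤ T →
      ‖(S (n+1) t - S n t) - (S (n+1) s - S n s)‖
        ≤ ((t-s) * 2^n / T + 2) * (2 * (Cδ * (T / 2^n) ^ θ)) := by
    intro n s t h0s hst htT
    have h0t : 0 ≤ t := h0s.trans hst
    have hsT : s ≤ T := hst.trans htT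
    rw [href n t, href n s, ← Finset.sum_sub_distrib]
    set W := (Finset.range (2^n)).filter (fun k => τ n k < t ∧ s < τ n (k+1)) with hW
    have hzero : ∀ k ∈ Finset.range (2^n), k ∉ W → D n k t - D n k s = 0 := by
      intro k hkr hkW
      rw [hW, Finset.mem_filter] at hkW
      push_neg at hkW
      rcases le_or_gt t (τ n k) with hc | hc
      · -- all points ≥ t ≥ s : everything degenerates
        have e1 : τ n k ≤ τ (n+1) (2*k) := le_of_eq (hτdouble n k).symm
        have e2 : τ n k ≤ τ (n+1) (2*k+1) := (le_of_eq (hτdouble n k).symm).trans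
          (hτmono (n+1) (by omega))
        have e3 : τ n k ≤ τ (n+1) (2*k+2) := (le_of_eq (hτdouble n k).symm).trans
          (hτmono (n+1) (by omega))
        have m1 : min t (τ (n+1) (2*k)) = t := min_eq_left (hc.trans e1)
        have m2 : min t (τ (n+1) (2*k+1)) = t := min_eq_left (hc.trans e2)
        have m3 : min t (τ (n+1) (2*k+2)) = t := min_eq_left (hc.trans e3)
        have hts : s ≤ τ n k := hst.trans hc
        have m4 : min s (τ (n+1) (2*k)) = s := min_eq_left (hts.trans e1)
        have m5 : min s (τ (n+1) (2*k+1)) = s := min_eq_left (hts.trans e2)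
        have m6 : min s (τ (n+1) (2*k+2)) = s := min_eq_left (hts.trans e3)
        rw [hDdef]
        simp only
        rw [m1, m2, m3, m4, m5, m6, hA0 t h0t htT, hA0 s h0s hsT]
        abel
      · have hsk : τ n (k+1) ≤ s := hkW hkr hc
        have e1 : τ (n+1) (2*k) ≤ τ n (k+1) := (hτdouble n k) ▸ (hτmono n (by omega))
        have e2 : τ (n+1) (2*k+1) ≤ τ n (k+1) := by
          have : τ (n+1) (2*k+1) ≤ τ (n+1) (2*(k+1)) := hτmono (n+1) (by omega)
          rw [hτdouble n (k+1)] at this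
          exact this
        have e3 : τ (n+1) (2*k+2) ≤ τ n (k+1) := by
          have : (2*(k+1)) = 2*k+2 := by ring
          rw [← this, hτdouble n (k+1)]
        have m1 : min t (τ (n+1) (2*k)) = τ (n+1) (2*k) :=
          min_eq_right ((e1.trans hsk).trans hst)
        have m2 : min t (τ (n+1) (2*k+1)) = τ (n+1) (2*k+1) :=
          min_eq_right ((e2.trans hsk).trans hst)
        have m3 : min t (τ (n+1) (2*k+2)) = τ (n+1) (2*k+2) :=
          min_eq_right ((e3.trans hsk).trans hst)
        have m4 : min s (τ (n+1) (2*k)) = τ (n+1) (2*k) := min_eq_right (e1.trans hsk)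
        have m5 : min s (τ (n+1) (2*k+1)) = τ (n+1) (2*k+1) := min_eq_right (e2.trans hsk)
        have m6 : min s (τ (n+1) (2*k+2)) = τ (n+1) (2*k+2) := min_eq_right (e3.trans hsk)
        rw [hDdef]
        simp only
        rw [m1, m2, m3, m4, m5, m6]
        abel
    have hsum : ∑ k ∈ Finset.range (2^n), (D n k t - D n k s)
        = ∑ k ∈ W, (D n k t - D n k s) := by
      refine (Finset.sum_subset (Finset.filter_subset _ _) ?_).symm
      intro k hk hkW
      exact hzero k hk hkW
    rw [hsum]
    calc ‖∑ k ∈ W, (D n k t - D n k s)‖ ≤ ∑ k ∈ W, ‖D n k t - D n k s‖ := norm_sum_le _ _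
      _ ≤ ∑ _k ∈ W, 2 * (Cδ * (T / 2^n) ^ θ) := by
          refine Finset.sum_le_sum (fun k _ => ?_)
          calc ‖D n k t - D n k s‖ ≤ ‖D n k t‖ + ‖D n k s‖ := norm_sub_le _ _
            _ ≤ Cδ * (T / 2^n) ^ θ + Cδ * (T / 2^n) ^ θ :=
                add_le_add (hDb n k t h0t htT) (hDb n k s h0s hsT)
            _ = 2 * (Cδ * (T / 2^n) ^ θ) := by ring
      _ = (W.card : ℝ) * (2 * (Cδ * (T / 2^n) ^ θ)) := by
          rw [Finset.sum_const, nsmul_eq_mul]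
      _ ≤ ((t-s) * 2^n / T + 2) * (2 * (Cδ * (T / 2^n) ^ θ)) := by
          refine mul_le_mul_of_nonneg_right ?_ ?_
          · exact hcount n s t h0s hst
          · have : (0:ℝ) ≤ (T / 2^n) ^ θ := Real.rpow_nonneg (by positivity) _
            positivity
  -- convergence
  have hcauchy : ∀ t : ℝ, 0 ≤ t → t ≤ T → CauchySeq (fun n => S n t) := by
    intro t h0 h1
    refine cauchySeq_of_le_geometric r (Cδ * T ^ θ) hr1 (fun n => ?_)
    rw [dist_eq_norm, show S n t - S (n+1) t = -(S (n+1) t - S n t) by abel, norm_neg]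
    exact hglob n t h0 h1
  set g : ℝ → E := fun t => limUnder atTop (fun n => S n t) with hgdef
  have hgl : ∀ t : ℝ, 0 ≤ t → t ≤ T → Tendsto (fun n => S n t) atTop (𝓝 (g t)) := by
    intro t h0 h1
    exact (hcauchy t h0 h1).tendsto_limUnder
  have h1r : 0 < 1 - r := by linarith
  refine ⟨g, (6 + 6 / (1 - r)) * Cδ, ?_, ?_⟩
  · have h6 : (0:ℝ) ≤ 6 / (1 - r) := by positivity
    nlinarith
  intro s t h0s hst htT
  rcases eq_or_lt_of_le hst with rfl | hstlt
  · simp [hA0 s h0s htT, Real.zero_rpow (show θ ≠ 0 by linarith)]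
  have h0t : 0 ≤ t := h0s.trans hst
  have hsT : s ≤ T := hst.trans htT
  have hts0 : 0 < t - s := by linarith
  -- choice of the level N
  have hNex : ∃ Nn : ℕ, T / 2^Nn ≤ t - s ∧ t - s ≤ 2 * (T / 2^Nn) := by
    have hex : ∃ n : ℕ, T / 2^n ≤ t - s := by
      obtain ⟨n, hn⟩ := pow_unbounded_of_one_lt (T / (t - s)) one_lt_two
      refine ⟨n, ?_⟩
      have h2 : (0:ℝ) < 2^n := by positivity
      rw [div_le_iff₀ h2]
      rw [div_lt_iff₀ hts0] at hn
      nlinarith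
    refine ⟨Nat.find hex, Nat.find_spec hex, ?_⟩
    set N := Nat.find hex with hNdef
    rcases Nat.eq_zero_or_pos N with h | h
    · rw [h]; simp only [pow_zero, div_one]; linarith
    · have hm : N - 1 < N := by omega
      have hmin := Nat.find_min hex hm
      push_neg at hmin
      have he : (2:ℝ)^N = 2 * 2^(N-1) := by
        rw [← pow_succ']
        congr 1
        omega
      rw [he]
      have h2 : (0:ℝ) < 2^(N-1) := by positivity
      have he2 : 2 * (T / (2 * 2^(N-1))) = T / 2^(N-1) := by field_simp
      rw [he2]
      linarith
  obtain ⟨N, hN1, hN2⟩ := hNex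
  -- tail estimate
  set SS : ℕ → E := fun n => S n t - S n s with hSSdef
  have hSSt : Tendsto SS atTop (𝓝 (g t - g s)) := (hgl t h0t htT).sub (hgl s h0s hsT)
  have hstep : ∀ n, N ≤ n → dist (SS n) (SS (n+1)) ≤ (6 * Cδ * T ^ θ * (t-s) / T) * r ^ n := by
    intro n hn
    rw [dist_eq_norm, hSSdef,
      show (S n t - S n s) - (S (n+1) t - S (n+1) s)
        = -((S (n+1) t - S n t) - (S (n+1) s - S n s)) by abel, norm_neg]
    refine (hlocal n s t h0s hst htT).trans ?_
    have hone : (1:ℝ) ≤ (t-s) * 2^n / T := by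
      have h2 : (2:ℝ)^N ≤ 2^n := pow_le_pow_right₀ one_le_two hn
      have hTle : T ≤ (t-s) * 2^N := by
        have hh := hN1
        rw [div_le_iff₀ (by positivity : (0:ℝ) < 2^N)] at hh
        exact hh
      have h3 : (t-s) * 2^N ≤ (t-s)*2^n := mul_le_mul_of_nonneg_left h2 hts0.le
      rw [le_div_iff₀ hT]
      linarith
    have hfac : (t-s) * 2^n / T + 2 ≤ 3 * ((t-s) * 2^n / T) := by linarith
    have hmesh : (0:ℝ) ≤ 2 * (Cδ * (T/2^n)^θ) := by
      have hmn : (0:ℝ) ≤ (T/2^n)^θ := Real.rpow_nonneg (by positivity) _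
      positivity
    refine le_trans (mul_le_mul_of_nonneg_right hfac hmesh) (le_of_eq ?_)
    calc 3 * ((t-s) * 2^n / T) * (2 * (Cδ * (T/2^n)^θ))
        = (6 * Cδ * (t-s) / T) * ((2:ℝ)^n * (T/2^n)^θ) := by ring
      _ = (6 * Cδ * (t-s) / T) * (T^θ * r^n) := by rw [hgeom0 n]
      _ = (6 * Cδ * T^θ * (t-s) / T) * r ^ n := by ring
  have hc0 : 0 ≤ 6 * Cδ * T ^ θ * (t-s) / T := by
    have hTθ0 : (0:ℝ) ≤ T^θ := Real.rpow_nonneg hT.le _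
    positivity
  have htail : ∀ m, N ≤ m → dist (SS N) (SS m)
      ≤ (6 * Cδ * T ^ θ * (t-s) / T) * (r ^ N * (1 / (1 - r))) := by
    intro m hm
    refine (dist_le_Ico_sum_of_dist_le hm (fun {k} hk1 _ => hstep k hk1)).trans ?_
    have : ∑ i ∈ Finset.Ico N m, (6 * Cδ * T ^ θ * (t-s) / T) * r ^ i
        = (6 * Cδ * T ^ θ * (t-s) / T) * ∑ i ∈ Finset.Ico N m, r ^ i := by
      rw [Finset.mul_sum]
    rw [this]
    refine mul_le_mul_of_nonneg_left ?_ hc0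
    rw [Finset.sum_Ico_eq_sum_range]
    have e1 : ∑ i ∈ Finset.range (m - N), r ^ (N + i)
        = r^N * ∑ i ∈ Finset.range (m-N), r^i := by
      rw [Finset.mul_sum]
      exact Finset.sum_congr rfl (fun i _ => pow_add r N i)
    rw [e1]
    refine mul_le_mul_of_nonneg_left ?_ (by positivity)
    have hgs : ∑ i ∈ Finset.range (m-N), r^i = (1 - r^(m-N))/(1-r) := by
      rw [geom_sum_eq (ne_of_lt hr1)]
      rw [show r^(m-N) - 1 = -(1 - r^(m-N)) by ring, show r - 1 = -(1-r) by ring,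
        neg_div_neg_eq]
    rw [hgs]
    have hrn : (0:ℝ) ≤ r^(m-N) := by positivity
    exact div_le_div₀ zero_le_one (by linarith) h1r le_rfl
  have htail2 : dist (SS N) (g t - g s)
      ≤ (6 * Cδ * T ^ θ * (t-s) / T) * (r ^ N * (1 / (1 - r))) := by
    have hlim : Tendsto (fun m => dist (SS N) (SS m)) atTop (𝓝 (dist (SS N) (g t - g s))) :=
      tendsto_const_nhds.dist hSSt
    refine le_of_tendsto hlim ?_
    filter_upwards [eventually_ge_atTop N] with m hm using htail m hm
  -- simplify the tail bound
  have hrN : r ^ N ≤ ((t-s)/T) ^ (θ - 1) := by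
    have e1 : r ^ N = ((2:ℝ) ^ (-(N:ℝ))) ^ (θ-1) := by
      rw [hrdef, ← Real.rpow_natCast ((2:ℝ)^(1-θ)) N, ← Real.rpow_mul (by norm_num),
        ← Real.rpow_mul (by norm_num)]
      congr 1
      ring
    rw [e1]
    refine Real.rpow_le_rpow (by positivity) ?_ (by linarith)
    have e2 : (2:ℝ) ^ (-(N:ℝ)) = (T / 2^N) / T := by
      rw [Real.rpow_neg (by norm_num), Real.rpow_natCast]
      field_simp
    rw [e2]
    gcongr
  -- head estimate: clamped partition
  set p : ℕ → ℝ := fun k => min t (max s (τ N k)) with hpdef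
  have hpmono : Monotone p := fun k l hkl =>
    min_le_min le_rfl (max_le_max le_rfl (hτmono N hkl))
  have hp0 : p 0 = s := by
    rw [hpdef]; simp only
    rw [hτ0, max_eq_left h0s, min_eq_right hst]
  have hpN : p (2^N) = t := by
    rw [hpdef]; simp only
    rw [hτT, max_eq_right hsT, min_eq_left htT]
  have hpl : ∀ k, s ≤ p k := fun k => le_min hst (le_max_left s _)
  have hpu : ∀ k, p k ≤ t := fun k => min_le_left _ _
  have hCts : 0 ≤ Cδ * (t-s)^θ := by
    have : (0:ℝ) ≤ (t-s)^θ := Real.rpow_nonneg hts0.le _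
    positivity
  have hhead1 : ‖SS N - ∑ k ∈ Finset.range (2^N), A (p k) (p (k+1))‖
      ≤ 2 * (Cδ * (t-s)^θ) := by
    have e0 : SS N - ∑ k ∈ Finset.range (2^N), A (p k) (p (k+1))
        = ∑ k ∈ Finset.range (2^N),
            ((A (min t (τ N k)) (min t (τ N (k+1))) - A (min s (τ N k)) (min s (τ N (k+1))))
              - A (p k) (p (k+1))) := by
      rw [hSSdef, hSdef]
      simp only
      rw [← Finset.sum_sub_distrib, ← Finset.sum_sub_distrib]
    set W := (Finset.range (2^N)).filter (fun k => τ N k < s ∧ s < τ N (k+1)) with hW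
    have hzero : ∀ k ∈ Finset.range (2^N), k ∉ W →
        ((A (min t (τ N k)) (min t (τ N (k+1))) - A (min s (τ N k)) (min s (τ N (k+1))))
          - A (p k) (p (k+1))) = 0 := by
      intro k hk hkW
      rw [hW, Finset.mem_filter] at hkW
      push_neg at hkW
      rcases le_or_gt s (τ N k) with hc | hc
      · have hck : s ≤ τ N (k+1) := hc.trans (hτmono N (by omega))
        have m4 : min s (τ N k) = s := min_eq_left hc
        have m5 : min s (τ N (k+1)) = s := min_eq_left hck
        have mp1 : p k = min t (τ N k) := by
          rw [hpdef]; simp only; rw [max_eq_right hc]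
        have mp2 : p (k+1) = min t (τ N (k+1)) := by
          rw [hpdef]; simp only; rw [max_eq_right hck]
        rw [m4, m5, mp1, mp2, hA0 s h0s hsT]
        abel
      · have hks : τ N (k+1) ≤ s := hkW hk hc
        have hkk : τ N k ≤ τ N (k+1) := hτmono N (by omega)
        have m1 : min t (τ N k) = τ N k := min_eq_right ((hkk.trans hks).trans hst)
        have m2 : min t (τ N (k+1)) = τ N (k+1) := min_eq_right (hks.trans hst)
        have m4 : min s (τ N k) = τ N k := min_eq_right (hkk.trans hks)
        have m5 : min s (τ N (k+1)) = τ N (k+1) := min_eq_right hks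
        have mp1 : p k = s := by
          rw [hpdef]; simp only
          rw [max_eq_left (hkk.trans hks), min_eq_right hst]
        have mp2 : p (k+1) = s := by
          rw [hpdef]; simp only
          rw [max_eq_left hks, min_eq_right hst]
        rw [m1, m2, m4, m5, mp1, mp2, hA0 s h0s hsT]
        abel
    have e1 : SS N - ∑ k ∈ Finset.range (2^N), A (p k) (p (k+1))
        = ∑ k ∈ W,
            ((A (min t (τ N k)) (min t (τ N (k+1))) - A (min s (τ N k)) (min s (τ N (k+1))))
              - A (p k) (p (k+1))) := by
      rw [e0]
      exact (Finset.sum_subset (Finset.filter_subset _ _) hzero).symm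
    rw [e1]
    have hterm : ∀ k ∈ W,
        ‖(A (min t (τ N k)) (min t (τ N (k+1))) - A (min s (τ N k)) (min s (τ N (k+1))))
          - A (p k) (p (k+1))‖ ≤ Cδ * (t-s)^θ := by
      intro k hk
      rw [hW, Finset.mem_filter] at hk
      obtain ⟨_, hks, hsk⟩ := hk
      have m1 : min t (τ N k) = τ N k := min_eq_right (hks.le.trans hst)
      have m4 : min s (τ N k) = τ N k := min_eq_right hks.le
      have m5 : min s (τ N (k+1)) = s := min_eq_left hsk.le
      have mp1 : p k = s := by
        rw [hpdef]; simp only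
        rw [max_eq_left hks.le, min_eq_right hst]
      have mp2 : p (k+1) = min t (τ N (k+1)) := by
        rw [hpdef]; simp only
        rw [max_eq_right hsk.le]
      rw [m1, m4, m5, mp1, mp2]
      have hb1 : s ≤ min t (τ N (k+1)) := le_min hst hsk.le
      have hb2 : min t (τ N (k+1)) ≤ T := (min_le_left _ _).trans htT
      have hd := hδ (τ N k) s (min t (τ N (k+1))) (hτnn N k) hks.le hb1 hb2
      refine hd.trans (mul_le_mul_of_nonneg_left ?_ hC)
      refine Real.rpow_le_rpow (by linarith) ?_ hθ0.le
      have h6 : min t (τ N (k+1)) - τ N k ≤ τ N (k+1) - τ N k := by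
        have := min_le_right t (τ N (k+1)); linarith
      rw [hτstep N k] at h6
      linarith
    calc ‖∑ k ∈ W, ((A (min t (τ N k)) (min t (τ N (k+1)))
            - A (min s (τ N k)) (min s (τ N (k+1)))) - A (p k) (p (k+1)))‖
        ≤ ∑ k ∈ W, ‖(A (min t (τ N k)) (min t (τ N (k+1)))
            - A (min s (τ N k)) (min s (τ N (k+1)))) - A (p k) (p (k+1))‖ := norm_sum_le _ _
      _ ≤ ∑ _k ∈ W, Cδ * (t-s)^θ := Finset.sum_le_sum hterm
      _ = (W.card : ℝ) * (Cδ * (t-s)^θ) := by rw [Finset.sum_const, nsmul_eq_mul]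
      _ ≤ 2 * (Cδ * (t-s)^θ) := by
          refine mul_le_mul_of_nonneg_right ?_ hCts
          have := hcount N s s h0s le_rfl
          simpa using this
  -- collapsing the clamped partition
  have hcol : ∀ Mn : ℕ, ‖(∑ k ∈ Finset.range Mn, A (p k) (p (k+1))) - A s (p Mn)‖
      ≤ (((Finset.range Mn).filter (fun k => p k < p (k+1))).card : ℝ) * (Cδ * (t-s)^θ) := by
    intro Mn
    induction Mn with
    | zero => simp [hp0, hA0 s h0s hsT]
    | succ Mo ih =>
      rcases eq_or_lt_of_le (hpmono (Nat.le_succ Mo)) with hpe | hpe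
      · have e1 : (Finset.range (Mo+1)).filter (fun k => p k < p (k+1))
            = (Finset.range Mo).filter (fun k => p k < p (k+1)) := by
          rw [Finset.range_add_one, Finset.filter_insert, if_neg (by rw [← hpe]; exact lt_irrefl _)]
        rw [Finset.sum_range_succ, ← hpe, hA0 (p Mo) (h0s.trans (hpl Mo)) ((hpu Mo).trans htT),
          add_zero, e1]
        exact ih
      · have hmerge : ‖A s (p (Mo+1)) - A s (p Mo) - A (p Mo) (p (Mo+1))‖ ≤ Cδ * (t-s)^θ := by
          have hd := hδ s (p Mo) (p (Mo+1)) h0s (hpl Mo) hpe.le ((hpu (Mo+1)).trans htT)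
          refine hd.trans (mul_le_mul_of_nonneg_left ?_ hC)
          refine Real.rpow_le_rpow (by linarith [hpl (Mo+1)]) ?_ hθ0.le
          linarith [hpu (Mo+1), hpl (Mo+1)]
        have e1 : (Finset.range (Mo+1)).filter (fun k => p k < p (k+1))
            = insert Mo ((Finset.range Mo).filter (fun k => p k < p (k+1))) := by
          rw [Finset.range_add_one, Finset.filter_insert, if_pos hpe]
        have hnotmem : Mo ∉ (Finset.range Mo).filter (fun k => p k < p (k+1)) := by
          simp
        rw [Finset.sum_range_succ, e1, Finset.card_insert_of_notMem hnotmem]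
        push_cast
        have e2 : (∑ k ∈ Finset.range Mo, A (p k) (p (k+1))) + A (p Mo) (p (Mo+1))
              - A s (p (Mo+1))
            = ((∑ k ∈ Finset.range Mo, A (p k) (p (k+1))) - A s (p Mo))
              - (A s (p (Mo+1)) - A s (p Mo) - A (p Mo) (p (Mo+1))) := by
          abel
        rw [e2]
        calc ‖((∑ k ∈ Finset.range Mo, A (p k) (p (k+1))) - A s (p Mo))
              - (A s (p (Mo+1)) - A s (p Mo) - A (p Mo) (p (Mo+1)))‖
            ≤ ‖(∑ k ∈ Finset.range Mo, A (p k) (p (k+1))) - A s (p Mo)‖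
              + ‖A s (p (Mo+1)) - A s (p Mo) - A (p Mo) (p (Mo+1))‖ := norm_sub_le _ _
          _ ≤ (((Finset.range Mo).filter (fun k => p k < p (k+1))).card : ℝ) * (Cδ * (t-s)^θ)
              + Cδ * (t-s)^θ := add_le_add ih hmerge
          _ = ((((Finset.range Mo).filter (fun k => p k < p (k+1))).card : ℝ) + 1)
              * (Cδ * (t-s)^θ) := by ring
  -- the number of active intervals is at most 4
  have hcard4 : (((Finset.range (2^N)).filter (fun k => p k < p (k+1))).card : ℝ) ≤ 4 := by
    have hsub : (Finset.range (2^N)).filter (fun k => p k < p (k+1))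
        ⊆ (Finset.range (2^N)).filter (fun k => τ N k < t ∧ s < τ N (k+1)) := by
      intro k hk
      rw [Finset.mem_filter] at hk ⊢
      refine ⟨hk.1, ?_, ?_⟩
      · by_contra hcon
        push_neg at hcon
        have e1 : p k = t := by
          rw [hpdef]; simp only
          rw [min_eq_left (le_max_of_le_right hcon)]
        have e2 : p (k+1) = t := by
          rw [hpdef]; simp only
          rw [min_eq_left (le_max_of_le_right (hcon.trans (hτmono N (by omega))))]
        rw [e1, e2] at hk
        exact lt_irrefl _ hk.2
      · by_contra hcon
        push_neg at hcon
        have e2 : p (k+1) = s := by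
          rw [hpdef]; simp only
          rw [max_eq_left hcon, min_eq_right hst]
        have e1 : p k = s := by
          rw [hpdef]; simp only
          rw [max_eq_left ((hτmono N (by omega)).trans hcon), min_eq_right hst]
        rw [e1, e2] at hk
        exact lt_irrefl _ hk.2
    have h1 := Finset.card_le_card hsub
    have h2 := hcount N s t h0s hst
    have h3 : (t - s) * 2^N / T ≤ 2 := by
      have h4 : (t-s) * 2^N ≤ 2 * T := by
        have h5 : (0:ℝ) < 2^N := by positivity
        have h6 := hN2
        have : 2 * (T / 2^N) * 2^N = 2 * T := by field_simp
        calc (t-s) * 2^N ≤ (2 * (T / 2^N)) * 2^N :=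
              mul_le_mul_of_nonneg_right h6 h5.le
          _ = 2 * T := this
      rw [div_le_iff₀ hT]
      linarith
    calc (((Finset.range (2^N)).filter (fun k => p k < p (k+1))).card : ℝ)
        ≤ (((Finset.range (2^N)).filter (fun k => τ N k < t ∧ s < τ N (k+1))).card : ℝ) := by
          exact_mod_cast h1
      _ ≤ (t - s) * 2^N / T + 2 := h2
      _ ≤ 4 := by linarith
  have hhead2 : ‖(∑ k ∈ Finset.range (2^N), A (p k) (p (k+1))) - A s t‖
      ≤ 4 * (Cδ * (t-s)^θ) := by
    have := hcol (2^N)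
    rw [hpN] at this
    refine this.trans (mul_le_mul_of_nonneg_right hcard4 hCts)
  -- final combination
  have hfin : ‖g t - g s - A s t‖
      ≤ (6 * Cδ * T ^ θ * (t-s) / T) * (r ^ N * (1 / (1 - r))) + 2 * (Cδ * (t-s)^θ)
        + 4 * (Cδ * (t-s)^θ) := by
    have e1 : g t - g s - A s t
        = -(SS N - (g t - g s))
          + (SS N - ∑ k ∈ Finset.range (2^N), A (p k) (p (k+1)))
          + ((∑ k ∈ Finset.range (2^N), A (p k) (p (k+1))) - A s t) := by
      abel
    rw [e1]
    have hd1 : ‖SS N - (g t - g s)‖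
        ≤ (6 * Cδ * T ^ θ * (t-s) / T) * (r ^ N * (1 / (1 - r))) := by
      rw [← dist_eq_norm]
      exact htail2
    calc ‖-(SS N - (g t - g s))
          + (SS N - ∑ k ∈ Finset.range (2^N), A (p k) (p (k+1)))
          + ((∑ k ∈ Finset.range (2^N), A (p k) (p (k+1))) - A s t)‖
        ≤ ‖-(SS N - (g t - g s))
            + (SS N - ∑ k ∈ Finset.range (2^N), A (p k) (p (k+1)))‖
          + ‖(∑ k ∈ Finset.range (2^N), A (p k) (p (k+1))) - A s t‖ := norm_add_le _ _
      _ ≤ (‖-(SS N - (g t - g s))‖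
            + ‖SS N - ∑ k ∈ Finset.range (2^N), A (p k) (p (k+1))‖)
          + ‖(∑ k ∈ Finset.range (2^N), A (p k) (p (k+1))) - A s t‖ := by
          exact add_le_add (norm_add_le _ _) le_rfl
      _ ≤ ((6 * Cδ * T ^ θ * (t-s) / T) * (r ^ N * (1 / (1 - r))) + 2 * (Cδ * (t-s)^θ))
          + 4 * (Cδ * (t-s)^θ) := by
          refine add_le_add (add_le_add ?_ hhead1) hhead2
          rw [norm_neg]
          exact hd1
  refine hfin.trans ?_
  -- finally, bound the tail term by 6/(1-r) * Cδ * (t-s)^θ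
  have htb : (6 * Cδ * T ^ θ * (t-s) / T) * (r ^ N * (1 / (1 - r)))
      ≤ (6 / (1-r)) * (Cδ * (t-s)^θ) := by
    have hTθ : T ^ θ = T * T^(θ-1) := by
      nth_rewrite 1 [show θ = 1 + (θ - 1) by ring]
      rw [Real.rpow_add hT, Real.rpow_one]
    have htsθ : (t-s)^θ = (t-s) * (t-s)^(θ-1) := by
      nth_rewrite 1 [show θ = 1 + (θ - 1) by ring]
      rw [Real.rpow_add hts0, Real.rpow_one]
    have hdiv : ((t-s)/T)^(θ-1) = (t-s)^(θ-1) / T^(θ-1) :=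
      Real.div_rpow hts0.le hT.le (θ-1)
    have hTθ1 : (0:ℝ) < T^(θ-1) := Real.rpow_pos_of_pos hT _
    have e1 : (6 * Cδ * T ^ θ * (t-s) / T) * (r ^ N * (1 / (1 - r)))
        = (6 / (1-r) * Cδ * (t-s) * T^(θ-1)) * r^N := by
      rw [hTθ]
      field_simp
    rw [e1]
    have e2 : (6 / (1-r)) * (Cδ * (t-s)^θ)
        = (6 / (1-r) * Cδ * (t-s) * T^(θ-1)) * ((t-s)^(θ-1) / T^(θ-1)) := by
      rw [htsθ]
      field_simp
    rw [e2, ← hdiv]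
    refine mul_le_mul_of_nonneg_left hrN ?_
    positivity
  have hrest : 2 * (Cδ * (t-s)^θ) + 4 * (Cδ * (t-s)^θ) = 6 * (Cδ * (t-s)^θ) := by ring
  have : (6 + 6 / (1 - r)) * Cδ * (t - s) ^ θ
      = (6 / (1-r)) * (Cδ * (t-s)^θ) + 6 * (Cδ * (t-s)^θ) := by ring
  rw [this]
  linarith
set_option maxHeartbeats 1000000 in
private theorem taylor2 {E₂ E₃ : Type*}
    [NormedAddCommGroup E₂] [NormedSpace ℝ E₂]
    [NormedAddCommGroup E₃] [NormedSpace ℝ E₃]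
    (F : E₂ → E₃) (hF : ContDiff ℝ 3 F) (M : ℝ)
    (hD3 : ∀ x, (ContinuousLinearMap.hasOpNorm (E := E₂) (F := E₂ →L[ℝ] E₂ →L[ℝ] E₃)
      (σ₁₂ := RingHom.id ℝ)).norm (fderiv ℝ (fderiv ℝ (fderiv ℝ F)) x) ≤ M) (a b : E₂) :
    ‖F b - F a - fderiv ℝ F a (b - a)
      - (1/2 : ℝ) • (fderiv ℝ (fderiv ℝ F) a (b - a) (b - a))‖
      ≤ M * ‖b - a‖ * ‖b - a‖ * ‖b - a‖ := by
  letI i1 : NormedAddCommGroup (E₂ →L[ℝ] E₂ →L[ℝ] E₃) := inferInstance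
  letI i2 : NormedSpace ℝ (E₂ →L[ℝ] E₂ →L[ℝ] E₃) := inferInstance
  have hM : 0 ≤ M := le_trans (norm_nonneg _) (hD3 a)
  have hF1 : Differentiable ℝ F := hF.differentiable (by norm_num)
  have hDF2 : ContDiff ℝ 2 (fderiv ℝ F) := hF.fderiv_right (by norm_num)
  have hF2 : Differentiable ℝ (fderiv ℝ F) := hDF2.differentiable (by norm_num)
  have hDF3 : ContDiff ℝ 1 (fderiv ℝ (fderiv ℝ F)) := hDF2.fderiv_right (by norm_num)
  have hF3 : Differentiable ℝ (fderiv ℝ (fderiv ℝ F)) := hDF3.differentiable one_ne_zero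
  set B := fderiv ℝ (fderiv ℝ F) with hB
  have symB : ∀ v w, B a v w = B a w v :=
    second_derivative_symmetric (fun y => (hF1 y).hasFDerivAt) ((hF2 a).hasFDerivAt)
  have lip2 : ∀ x y : E₂, ‖B x - B y‖ ≤ M * ‖x - y‖ := by
    intro x y
    exact Convex.norm_image_sub_le_of_norm_fderiv_le (fun z _ => hF3 z)
      (fun z _ => hD3 z) convex_univ (Set.mem_univ y) (Set.mem_univ x)
  set r := ‖b - a‖ with hr
  have hr0 : 0 ≤ r := norm_nonneg _
  have haff1 : ∀ (y : E₂), HasFDerivAt (fun x : E₂ => B a (x - a)) (B a) y := by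
    intro y
    have h := (B a).hasFDerivAt.comp y ((hasFDerivAt_id y).sub_const a)
    rw [ContinuousLinearMap.comp_id] at h
    exact h
  have hH : ∀ y : E₂, HasFDerivAt (fun z => fderiv ℝ F z - B a (z - a)) (B y - B a) y := by
    intro y
    exact (hF2 y).hasFDerivAt.sub (haff1 y)
  have step1 : ∀ x, ‖x - a‖ ≤ r → ‖fderiv ℝ F x - fderiv ℝ F a - B a (x - a)‖
      ≤ M * r * ‖x - a‖ := by
    intro x hx
    have key := Convex.norm_image_sub_le_of_norm_fderiv_le
      (f := fun z => fderiv ℝ F z - B a (z - a)) (C := M * r) (x := a) (y := x)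
      (fun z (_ : z ∈ Metric.closedBall a r) => (hH z).differentiableAt)
      (fun z hz => by
        rw [(hH z).fderiv]
        calc ‖B z - B a‖ ≤ M * ‖z - a‖ := lip2 z a
          _ ≤ M * r := by
              have hz' := Metric.mem_closedBall.mp hz
              rw [dist_eq_norm] at hz'
              exact mul_le_mul_of_nonneg_left hz' hM)
      (convex_closedBall a r) (Metric.mem_closedBall_self hr0)
      (by rw [Metric.mem_closedBall, dist_eq_norm]; exact hx)
    have e : (fderiv ℝ F x - B a (x - a)) - (fderiv ℝ F a - B a (a - a))
        = fderiv ℝ F x - fderiv ℝ F a - B a (x - a) := by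
      rw [sub_self, map_zero]
      abel
    have key' : ‖(fderiv ℝ F x - B a (x - a)) - (fderiv ℝ F a - B a (a - a))‖
        ≤ M * r * ‖x - a‖ := key
    rw [e] at key'
    exact key'
  -- derivative of the quadratic term
  have hquad : ∀ y : E₂, HasFDerivAt (fun x => B a (x - a) (x - a))
      ((2:ℝ) • (B a (y - a))) y := by
    intro y
    have hc : HasFDerivAt (fun x : E₂ => B a (x - a)) (B a) y := haff1 y
    have hu : HasFDerivAt (fun x : E₂ => x - a) (ContinuousLinearMap.id ℝ E₂) y :=
      (hasFDerivAt_id y).sub_const a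
    have h := hc.clm_apply hu
    convert h using 1
    ext v
    simp only [ContinuousLinearMap.smul_apply, ContinuousLinearMap.add_apply,
      ContinuousLinearMap.coe_comp', Function.comp_apply, ContinuousLinearMap.coe_id',
      id_eq, ContinuousLinearMap.flip_apply]
    rw [two_smul]
    congr 1
    exact symB (y - a) v
  have hG : ∀ y : E₂, HasFDerivAt
      (fun x => F x - fderiv ℝ F a (x - a) - (1/2:ℝ) • (B a (x - a) (x - a)))
      (fderiv ℝ F y - fderiv ℝ F a - B a (y - a)) y := by
    intro y
    have haff0 : HasFDerivAt (fun x : E₂ => fderiv ℝ F a (x - a)) (fderiv ℝ F a) y := by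
      have h := (fderiv ℝ F a).hasFDerivAt.comp y ((hasFDerivAt_id y).sub_const a)
      rw [ContinuousLinearMap.comp_id] at h
      exact h
    have h1 := ((hF1 y).hasFDerivAt.sub haff0).sub ((hquad y).const_smul (1/2:ℝ))
    convert h1 using 1
    · rfl
    rw [smul_smul]
    norm_num
  have key2 := Convex.norm_image_sub_le_of_norm_fderiv_le
    (f := fun x => F x - fderiv ℝ F a (x - a) - (1/2:ℝ) • (B a (x - a) (x - a)))
    (C := M * r * r) (x := a) (y := b)
    (fun z (_ : z ∈ Metric.closedBall a r) => (hG z).differentiableAt)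
    (fun z hz => by
      rw [(hG z).fderiv]
      have hzr : ‖z - a‖ ≤ r := by
        rw [← dist_eq_norm]; exact Metric.mem_closedBall.mp hz
      calc ‖fderiv ℝ F z - fderiv ℝ F a - B a (z - a)‖ ≤ M * r * ‖z - a‖ := step1 z hzr
        _ ≤ M * r * r := mul_le_mul_of_nonneg_left hzr (by positivity))
    (convex_closedBall a r) (Metric.mem_closedBall_self hr0)
    (by rw [Metric.mem_closedBall, dist_eq_norm])
  have e : (F b - fderiv ℝ F a (b - a) - (1/2:ℝ) • (B a (b - a) (b - a)))
      - (F a - fderiv ℝ F a (a - a) - (1/2:ℝ) • (B a (a - a) (a - a)))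
      = F b - F a - fderiv ℝ F a (b - a) - (1/2:ℝ) • (B a (b - a) (b - a)) := by
    rw [sub_self, map_zero]
    simp only [ContinuousLinearMap.zero_apply, map_zero, smul_zero]
    abel
  have key3 : ‖(F b - fderiv ℝ F a (b - a) - (1/2:ℝ) • (B a (b - a) (b - a)))
      - (F a - fderiv ℝ F a (a - a) - (1/2:ℝ) • (B a (a - a) (a - a)))‖
      ≤ M * r * r * ‖b - a‖ := key2
  rw [e] at key3
  calc ‖F b - F a - fderiv ℝ F a (b - a) - (1/2:ℝ) • (B a (b - a) (b - a))‖
      ≤ M * r * r * ‖b - a‖ := key3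
    _ = M * ‖b - a‖ * ‖b - a‖ * ‖b - a‖ := by rw [hr]

set_option maxHeartbeats 2000000 in
theorem stmt10 {E₂ E₃ : Type*}
    [NormedAddCommGroup E₂] [NormedSpace ℝ E₂] [CompleteSpace E₂]
    [NormedAddCommGroup E₃] [NormedSpace ℝ E₃] [CompleteSpace E₃]
    (d : ℕ) (T α : ℝ) (hT : 0 < T) (hα1 : 1 / 3 < α) (hα2 : α < 1 / 2)
    (X : ℝ → (Fin d → ℝ)) (XX : ℝ → ℝ → Matrix (Fin d) (Fin d) ℝ)
    (CX : ℝ)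
    (hX : ∀ s ∈ Icc 0 T, ∀ t ∈ Icc 0 T, ‖X t - X s‖ ≤ CX * |t - s| ^ α)
    (hXX : ∀ s ∈ Icc 0 T, ∀ t ∈ Icc 0 T, ∀ i j, |XX s t i j| ≤ CX * |t - s| ^ (2 * α))
    (hChen : ∀ s ∈ Icc 0 T, ∀ u ∈ Icc 0 T, ∀ t ∈ Icc 0 T, ∀ i j,
      XX s t i j - XX s u i j - XX u t i j = (X u i - X s i) * (X t j - X u j))
    (U Γ : ℝ → E₂)
    (U' : ℝ → ((Fin d → ℝ) →L[ℝ] E₂))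
    (U'' : ℝ → ((Fin d → ℝ) →L[ℝ] ((Fin d → ℝ) →L[ℝ] E₂)))
    (CU : ℝ)
    (hΓ : ∀ s ∈ Icc 0 T, ∀ t ∈ Icc 0 T, ‖Γ t - Γ s‖ ≤ CU * |t - s| ^ (2 * α))
    (hU'H : ∀ s ∈ Icc 0 T, ∀ t ∈ Icc 0 T, ‖U' t - U' s‖ ≤ CU * |t - s| ^ α)
    (hU''H : ∀ s ∈ Icc 0 T, ∀ t ∈ Icc 0 T, ‖U'' t - U'' s‖ ≤ CU * |t - s| ^ α)
    (hctrl : ∀ s ∈ Icc 0 T, ∀ t ∈ Icc 0 T,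
      ‖U t - U s - U' s (X t - X s)‖ ≤ CU * |t - s| ^ (2 * α))
    (hctrl' : ∀ s ∈ Icc 0 T, ∀ t ∈ Icc 0 T,
      ‖U' t - U' s - U'' s (X t - X s)‖ ≤ CU * |t - s| ^ (2 * α))
    -- `U_t = Γ_t + ∫_0^t U'_s d𝐗_s` (local expansion of the rough integral)
    (hU : ∀ s ∈ Icc 0 T, ∀ t ∈ Icc 0 T, s ≤ t →
      ‖U t - U s - (Γ t - Γ s) - U' s (X t - X s) -
          ∑ i : Fin d, ∑ j : Fin d, XX s t i j • U'' s (Pi.single i 1) (Pi.single j 1)‖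
        ≤ CU * (t - s) ^ (3 * α))
    (F : E₂ → E₃) (hF : ContDiff ℝ 3 F)
    (M : ℝ)
    (hD2 : ∀ x, ‖fderiv ℝ (fderiv ℝ F) x‖ ≤ M)
    (hD3 : ∀ x, (ContinuousLinearMap.hasOpNorm (E := E₂) (F := E₂ →L[ℝ] E₂ →L[ℝ] E₃)
      (σ₁₂ := RingHom.id ℝ)).norm (fderiv ℝ (fderiv ℝ (fderiv ℝ F)) x) ≤ M)
    (hD1 : ∀ t ∈ Icc 0 T, ‖fderiv ℝ F (U t)‖ ≤ M) :
    ∃ (Z₁ Z₂ Z₃ : ℝ → ℝ → E₃) (C : ℝ),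
      (∀ s ∈ Icc 0 T, ∀ u ∈ Icc 0 T, ∀ t ∈ Icc 0 T,
        Z₁ s u + Z₁ u t = Z₁ s t ∧ Z₂ s u + Z₂ u t = Z₂ s t ∧ Z₃ s u + Z₃ u t = Z₃ s t) ∧
      -- `Z₁ = ∫ DF(U)U' d𝐗`
      (∀ s ∈ Icc 0 T, ∀ t ∈ Icc 0 T, s ≤ t →
        ‖Z₁ s t - fderiv ℝ F (U s) (U' s (X t - X s)) -
            ∑ i : Fin d, ∑ j : Fin d, XX s t i j •
              (fderiv ℝ (fderiv ℝ F) (U s) (U' s (Pi.single i 1)) (U' s (Pi.single j 1)) +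
                fderiv ℝ F (U s) (U'' s (Pi.single i 1) (Pi.single j 1)))‖
          ≤ C * (t - s) ^ (3 * α)) ∧
      -- `Z₂ = ∫ DF(U) dΓ` (Young)
      (∀ s ∈ Icc 0 T, ∀ t ∈ Icc 0 T, s ≤ t →
        ‖Z₂ s t - fderiv ℝ F (U s) (Γ t - Γ s)‖ ≤ C * (t - s) ^ (3 * α)) ∧
      -- `Z₃ = ∫ D²F(U)(U',U') d[𝐗]` (Young), where
      -- `[𝐗]_t i j = δX_{0,t}ᵢ δX_{0,t}ⱼ − (𝕏_{0,t} i j + 𝕏_{0,t} j i)`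
      (∀ s ∈ Icc 0 T, ∀ t ∈ Icc 0 T, s ≤ t →
        ‖Z₃ s t - ∑ i : Fin d, ∑ j : Fin d,
              (((X t i - X 0 i) * (X t j - X 0 j) - (XX 0 t i j + XX 0 t j i)) -
                ((X s i - X 0 i) * (X s j - X 0 j) - (XX 0 s i j + XX 0 s j i))) •
              fderiv ℝ (fderiv ℝ F) (U s) (U' s (Pi.single i 1)) (U' s (Pi.single j 1))‖
          ≤ C * (t - s) ^ (3 * α)) ∧
      -- the rough Itô formula
      (∀ t ∈ Icc 0 T,
        F (U t) = F (U 0) + Z₁ 0 t + Z₂ 0 t + (1 / 2 : ℝ) • Z₃ 0 t) := by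
  classical
  letI i1 : NormedAddCommGroup (E₂ →L[ℝ] E₂ →L[ℝ] E₃) := inferInstance
  letI i2 : NormedSpace ℝ (E₂ →L[ℝ] E₂ →L[ℝ] E₃) := inferInstance
  have hα0 : (0:ℝ) < α := by linarith
  have hθ : (1:ℝ) < 3 * α := by linarith
  have h0T : (0:ℝ) ∈ Icc (0:ℝ) T := ⟨le_rfl, hT.le⟩
  have hTT : T ∈ Icc (0:ℝ) T := ⟨hT.le, le_rfl⟩
  -- nonnegativity of the constants
  have hTpow : ∀ β : ℝ, 0 < β → (0:ℝ) < |T - 0| ^ β := by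
    intro β hβ
    apply Real.rpow_pos_of_pos
    rw [sub_zero, abs_of_pos hT]
    exact hT
  have hCX0 : 0 ≤ CX := by
    have h := hX 0 h0T T hTT
    have h2 := hTpow α hα0
    nlinarith [norm_nonneg (X T - X 0)]
  have hCU0 : 0 ≤ CU := by
    have h := hΓ 0 h0T T hTT
    have h2 := hTpow (2*α) (by linarith)
    nlinarith [norm_nonneg (Γ T - Γ 0)]
  have hM0 : 0 ≤ M := le_trans (norm_nonneg _) (hD2 (U 0))
  -- rpow helpers
  have habs : ∀ {a b : ℝ}, a ≤ b → |b - a| = b - a := fun h => abs_of_nonneg (by linarith)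
  have h2αsplit : ∀ x : ℝ, 0 ≤ x → x ^ (2*α) = x ^ α * x ^ α := by
    intro x hx
    rw [two_mul, Real.rpow_add_of_nonneg hx hα0.le hα0.le]
  have h3αsplit : ∀ x : ℝ, 0 ≤ x → x ^ (3*α) = x ^ α * x ^ (2*α) := by
    intro x hx
    rw [show (3:ℝ)*α = α + 2*α by ring, Real.rpow_add_of_nonneg hx hα0.le (by linarith)]
  have h3αsplit' : ∀ x : ℝ, 0 ≤ x → x ^ (3*α) = x ^ α * x ^ α * x ^ α := by
    intro x hx
    rw [h3αsplit x hx, h2αsplit x hx, mul_assoc]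
  have hdTle : ∀ {a b : ℝ}, a ∈ Icc (0:ℝ) T → b ∈ Icc (0:ℝ) T → |b - a| ≤ T := by
    intro a b ha hb
    rw [abs_le]
    constructor <;> [linarith [ha.1, hb.2, ha.2, hb.1]; linarith [ha.1, hb.2, ha.2, hb.1]]
  have hpowT : ∀ {a b : ℝ}, a ∈ Icc (0:ℝ) T → b ∈ Icc (0:ℝ) T → |b - a| ^ α ≤ T ^ α :=
    fun ha hb => Real.rpow_le_rpow (abs_nonneg _) (hdTle ha hb) hα0.le
  -- smoothness facts
  have hF1 : Differentiable ℝ F := hF.differentiable (by norm_num)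
  have hDF2 : ContDiff ℝ 2 (fderiv ℝ F) := hF.fderiv_right (by norm_num)
  have hF2 : Differentiable ℝ (fderiv ℝ F) := hDF2.differentiable (by norm_num)
  have hDF3 : ContDiff ℝ 1 (fderiv ℝ (fderiv ℝ F)) := hDF2.fderiv_right (by norm_num)
  have hF3 : Differentiable ℝ (fderiv ℝ (fderiv ℝ F)) := hDF3.differentiable one_ne_zero
  have symB : ∀ x v w, fderiv ℝ (fderiv ℝ F) x v w = fderiv ℝ (fderiv ℝ F) x w v := fun x =>
    second_derivative_symmetric (fun y => (hF1 y).hasFDerivAt) ((hF2 x).hasFDerivAt)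
  have lipDF : ∀ x y : E₂, ‖fderiv ℝ F x - fderiv ℝ F y‖ ≤ M * ‖x - y‖ := by
    intro x y
    exact Convex.norm_image_sub_le_of_norm_fderiv_le (fun z _ => hF2 z)
      (fun z _ => hD2 z) convex_univ (Set.mem_univ y) (Set.mem_univ x)
  have lipB : ∀ x y : E₂, ‖fderiv ℝ (fderiv ℝ F) x - fderiv ℝ (fderiv ℝ F) y‖ ≤ M * ‖x - y‖ := by
    intro x y
    exact Convex.norm_image_sub_le_of_norm_fderiv_le (fun z _ => hF3 z)
      (fun z _ => hD3 z) convex_univ (Set.mem_univ y) (Set.mem_univ x)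
  -- bounds on U', U
  set B' : ℝ := ‖U' 0‖ + CU * T ^ α with hB'def
  have hTα0 : (0:ℝ) ≤ T ^ α := Real.rpow_nonneg hT.le _
  have hB'0 : 0 ≤ B' := by positivity
  have hU'bd : ∀ t ∈ Icc (0:ℝ) T, ‖U' t‖ ≤ B' := by
    intro t ht
    have h := hU'H 0 h0T t ht
    have h2 : |t - 0| ^ α ≤ T ^ α := hpowT h0T ht
    calc ‖U' t‖ ≤ ‖U' 0‖ + ‖U' t - U' 0‖ := by
          have := norm_sub_norm_le (U' t) (U' 0); linarith [norm_sub_rev (U' t) (U' 0) ▸ this]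
      _ ≤ ‖U' 0‖ + CU * T ^ α := by
          have : CU * |t - 0| ^ α ≤ CU * T ^ α := mul_le_mul_of_nonneg_left h2 hCU0
          linarith
  set C₂ : ℝ := B' * CX + CU * T ^ α with hC₂def
  have hC₂0 : 0 ≤ C₂ := by positivity
  have hUHol : ∀ s ∈ Icc (0:ℝ) T, ∀ t ∈ Icc (0:ℝ) T, ‖U t - U s‖ ≤ C₂ * |t - s| ^ α := by
    intro s hs t ht
    have h1 := hctrl s hs t ht
    have h2 : ‖U' s (X t - X s)‖ ≤ B' * (CX * |t - s| ^ α) := by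
      calc ‖U' s (X t - X s)‖ ≤ ‖U' s‖ * ‖X t - X s‖ := (U' s).le_opNorm _
        _ ≤ B' * (CX * |t - s| ^ α) :=
            mul_le_mul (hU'bd s hs) (hX s hs t ht) (norm_nonneg _) hB'0
    have h3 : |t - s| ^ (2*α) ≤ T ^ α * |t - s| ^ α := by
      rw [h2αsplit _ (abs_nonneg _)]
      exact mul_le_mul_of_nonneg_right (hpowT hs ht) (Real.rpow_nonneg (abs_nonneg _) _)
    calc ‖U t - U s‖ ≤ ‖U t - U s - U' s (X t - X s)‖ + ‖U' s (X t - X s)‖ := by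
          have := norm_add_le (U t - U s - U' s (X t - X s)) (U' s (X t - X s))
          simpa using this
      _ ≤ CU * |t - s| ^ (2*α) + B' * (CX * |t - s| ^ α) := add_le_add h1 h2
      _ ≤ C₂ * |t - s| ^ α := by
          have h4 : CU * |t - s| ^ (2*α) ≤ CU * (T ^ α * |t - s| ^ α) :=
            mul_le_mul_of_nonneg_left h3 hCU0
          rw [hC₂def]
          ring_nf
          ring_nf at h4 h2 ⊢
          nlinarith [Real.rpow_nonneg (abs_nonneg (t - s)) α]
  -- the germs
  set A2 : ℝ → ℝ → E₃ := fun s t => fderiv ℝ F (U s) (Γ t - Γ s) with hA2def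
  set Wf : ℝ → Fin d → Fin d → E₃ := fun s i j =>
    fderiv ℝ (fderiv ℝ F) (U s) (U' s (Pi.single i 1)) (U' s (Pi.single j 1)) with hWdef
  set A3 : ℝ → ℝ → E₃ := fun s t => ∑ i : Fin d, ∑ j : Fin d,
    (((X t i - X 0 i) * (X t j - X 0 j) - (XX 0 t i j + XX 0 t j i)) -
      ((X s i - X 0 i) * (X s j - X 0 j) - (XX 0 s i j + XX 0 s j i))) • Wf s i j with hA3def
  -- Chen increment identity for the bracket
  have hbrkt : ∀ s ∈ Icc (0:ℝ) T, ∀ t ∈ Icc (0:ℝ) T, ∀ i j,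
      (((X t i - X 0 i) * (X t j - X 0 j) - (XX 0 t i j + XX 0 t j i)) -
        ((X s i - X 0 i) * (X s j - X 0 j) - (XX 0 s i j + XX 0 s j i)))
      = (X t i - X s i) * (X t j - X s j) - XX s t i j - XX s t j i := by
    intro s hs t ht i j
    have h1 := hChen 0 h0T s hs t ht i j
    have h2 := hChen 0 h0T s hs t ht j i
    linear_combination -h1 - h2
  have hXcomp : ∀ s t : ℝ, ∀ i, |X t i - X s i| ≤ ‖X t - X s‖ := by
    intro s t i
    have h := norm_le_pi_norm (X t - X s) i
    simpa using h
  have hsingle : ∀ i : Fin d, ‖(Pi.single i 1 : Fin d → ℝ)‖ ≤ 1 := by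
    intro i
    rw [Pi.norm_single]
    simp
  have hU'e : ∀ s ∈ Icc (0:ℝ) T, ∀ i, ‖U' s (Pi.single i 1)‖ ≤ B' := by
    intro s hs i
    calc ‖U' s (Pi.single i 1)‖ ≤ ‖U' s‖ * ‖(Pi.single i 1 : Fin d → ℝ)‖ := (U' s).le_opNorm _
      _ ≤ B' * 1 := mul_le_mul (hU'bd s hs) (hsingle i) (norm_nonneg _) hB'0
      _ = B' := mul_one _
  have hmul3 : ∀ x y z X Y Z : ℝ, 0 ≤ x → 0 ≤ y → 0 ≤ z → 0 ≤ X → 0 ≤ Y →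
      x ≤ X → y ≤ Y → z ≤ Z → x * y * z ≤ X * Y * Z := by
    intro x y z X Y Z hx hy hz hX hY hxX hyY hzZ
    exact mul_le_mul (mul_le_mul hxX hyY hy hX) hzZ hz (mul_nonneg hX hY)
  have htri : ∀ (Q : E₂ →L[ℝ] E₂ →L[ℝ] E₃) (a b : E₂), ‖Q a b‖ ≤ ‖Q‖ * ‖a‖ * ‖b‖ := by
    intro Q a b
    calc ‖Q a b‖ ≤ ‖Q a‖ * ‖b‖ := (Q a).le_opNorm b
      _ ≤ (‖Q‖ * ‖a‖) * ‖b‖ :=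
          mul_le_mul_of_nonneg_right (Q.le_opNorm a) (norm_nonneg _)
  -- Hoelder continuity of W
  set CW : ℝ := M * C₂ * B' * B' + M * CU * B' + M * B' * CU with hCWdef
  have hCW0 : 0 ≤ CW := by positivity
  have hWH : ∀ s ∈ Icc (0:ℝ) T, ∀ t ∈ Icc (0:ℝ) T, ∀ i j,
      ‖Wf s i j - Wf t i j‖ ≤ CW * |t - s| ^ α := by
    intro s hs t ht i j
    have hsplit : Wf s i j - Wf t i j
        = (fderiv ℝ (fderiv ℝ F) (U s) - fderiv ℝ (fderiv ℝ F) (U t))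
            (U' s (Pi.single i 1)) (U' s (Pi.single j 1))
          + fderiv ℝ (fderiv ℝ F) (U t)
            (U' s (Pi.single i 1) - U' t (Pi.single i 1)) (U' s (Pi.single j 1))
          + fderiv ℝ (fderiv ℝ F) (U t)
            (U' t (Pi.single i 1)) (U' s (Pi.single j 1) - U' t (Pi.single j 1)) := by
      rw [hWdef]
      simp only [ContinuousLinearMap.sub_apply, map_sub]
      abel
    have hUts : ‖U s - U t‖ ≤ C₂ * |t - s| ^ α := by
      have h := hUHol t ht s hs
      rwa [abs_sub_comm] at h
    have hU'diff : ∀ k : Fin d, ‖U' s (Pi.single k 1) - U' t (Pi.single k 1)‖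
        ≤ CU * |t - s| ^ α := by
      intro k
      have h1 : U' s (Pi.single k 1) - U' t (Pi.single k 1)
          = (U' s - U' t) (Pi.single k 1) := by
        simp [ContinuousLinearMap.sub_apply]
      rw [h1]
      calc ‖(U' s - U' t) (Pi.single k 1)‖
          ≤ ‖U' s - U' t‖ * ‖(Pi.single k 1 : Fin d → ℝ)‖ := (U' s - U' t).le_opNorm _
        _ ≤ ‖U' s - U' t‖ * 1 := mul_le_mul_of_nonneg_left (hsingle k) (norm_nonneg _)
        _ = ‖U' s - U' t‖ := mul_one _
        _ ≤ CU * |t - s| ^ α := by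
            have h := hU'H t ht s hs
            rwa [abs_sub_comm] at h
    have hpow0 : (0:ℝ) ≤ |t - s| ^ α := Real.rpow_nonneg (abs_nonneg _) _
    have t1 : ‖(fderiv ℝ (fderiv ℝ F) (U s) - fderiv ℝ (fderiv ℝ F) (U t))
        (U' s (Pi.single i 1)) (U' s (Pi.single j 1))‖
        ≤ M * C₂ * B' * B' * |t - s| ^ α := by
      refine (htri _ _ _).trans ?_
      have h1 : ‖fderiv ℝ (fderiv ℝ F) (U s) - fderiv ℝ (fderiv ℝ F) (U t)‖
          ≤ M * (C₂ * |t - s| ^ α) :=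
        (lipB (U s) (U t)).trans (mul_le_mul_of_nonneg_left hUts hM0)
      have h2 := hU'e s hs i
      have h3 := hU'e s hs j
      have key := hmul3 _ _ _ _ _ _ (norm_nonneg _) (norm_nonneg _) (norm_nonneg _)
        (mul_nonneg hM0 (by positivity)) hB'0 h1 h2 h3
      calc ‖fderiv ℝ (fderiv ℝ F) (U s) - fderiv ℝ (fderiv ℝ F) (U t)‖
            * ‖U' s (Pi.single i 1)‖ * ‖U' s (Pi.single j 1)‖
          ≤ M * (C₂ * |t - s| ^ α) * B' * B' := key
        _ = M * C₂ * B' * B' * |t - s| ^ α := by ring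
    have t2 : ‖fderiv ℝ (fderiv ℝ F) (U t)
        (U' s (Pi.single i 1) - U' t (Pi.single i 1)) (U' s (Pi.single j 1))‖
        ≤ M * CU * B' * |t - s| ^ α := by
      refine (htri _ _ _).trans ?_
      have h1 := hD2 (U t)
      have h2 := hU'diff i
      have h3 := hU'e s hs j
      have key := hmul3 _ _ _ _ _ _ (norm_nonneg _) (norm_nonneg _) (norm_nonneg _)
        hM0 (by positivity) h1 h2 h3
      calc ‖fderiv ℝ (fderiv ℝ F) (U t)‖
            * ‖U' s (Pi.single i 1) - U' t (Pi.single i 1)‖ * ‖U' s (Pi.single j 1)‖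
          ≤ M * (CU * |t - s| ^ α) * B' := key
        _ = M * CU * B' * |t - s| ^ α := by ring
    have t3 : ‖fderiv ℝ (fderiv ℝ F) (U t)
        (U' t (Pi.single i 1)) (U' s (Pi.single j 1) - U' t (Pi.single j 1))‖
        ≤ M * B' * CU * |t - s| ^ α := by
      refine (htri _ _ _).trans ?_
      have h1 := hD2 (U t)
      have h2 := hU'e t ht i
      have h3 := hU'diff j
      have key := hmul3 _ _ _ _ _ _ (norm_nonneg _) (norm_nonneg _) (norm_nonneg _)
        hM0 hB'0 h1 h2 h3
      calc ‖fderiv ℝ (fderiv ℝ F) (U t)‖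
            * ‖U' t (Pi.single i 1)‖ * ‖U' s (Pi.single j 1) - U' t (Pi.single j 1)‖
          ≤ M * B' * (CU * |t - s| ^ α) := key
        _ = M * B' * CU * |t - s| ^ α := by ring
    rw [hsplit]
    calc ‖_ + _ + _‖ ≤ ‖_ + _‖ + ‖_‖ := norm_add_le _ _
      _ ≤ (‖_‖ + ‖_‖) + ‖_‖ := add_le_add_left (norm_add_le _ _) _
      _ ≤ (M * C₂ * B' * B' * |t - s| ^ α + M * CU * B' * |t - s| ^ α)
          + M * B' * CU * |t - s| ^ α := add_le_add (add_le_add t1 t2) t3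
      _ = CW * |t - s| ^ α := by rw [hCWdef]; ring
  -- coherence of the germ A2
  have hδ2 : ∀ s u t : ℝ, 0 ≤ s → s ≤ u → u ≤ t → t ≤ T →
      ‖A2 s t - A2 s u - A2 u t‖ ≤ (M * C₂ * CU) * (t - s) ^ (3*α) := by
    intro s u t h0s hsu hut htT
    have hs : s ∈ Icc (0:ℝ) T := ⟨h0s, by linarith⟩
    have hu : u ∈ Icc (0:ℝ) T := ⟨by linarith, by linarith⟩
    have ht : t ∈ Icc (0:ℝ) T := ⟨by linarith, htT⟩
    have he : A2 s t - A2 s u - A2 u t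
        = (fderiv ℝ F (U s) - fderiv ℝ F (U u)) (Γ t - Γ u) := by
      rw [hA2def]
      simp only [ContinuousLinearMap.sub_apply, ← map_sub]
      congr 1
      abel
    rw [he]
    have h1 : ‖(fderiv ℝ F (U s) - fderiv ℝ F (U u)) (Γ t - Γ u)‖
        ≤ ‖fderiv ℝ F (U s) - fderiv ℝ F (U u)‖ * ‖Γ t - Γ u‖ :=
      (fderiv ℝ F (U s) - fderiv ℝ F (U u)).le_opNorm _
    have h2 : ‖fderiv ℝ F (U s) - fderiv ℝ F (U u)‖ ≤ M * (C₂ * (t - s) ^ α) := by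
      refine (lipDF (U s) (U u)).trans ?_
      refine mul_le_mul_of_nonneg_left ?_ hM0
      have h3 : ‖U s - U u‖ ≤ C₂ * |u - s| ^ α := by
        rw [norm_sub_rev]
        exact hUHol s hs u hu
      refine h3.trans (mul_le_mul_of_nonneg_left ?_ hC₂0)
      rw [habs hsu]
      exact Real.rpow_le_rpow (by linarith) (by linarith) hα0.le
    have h4 : ‖Γ t - Γ u‖ ≤ CU * (t - s) ^ (2*α) := by
      refine (hΓ u hu t ht).trans (mul_le_mul_of_nonneg_left ?_ hCU0)
      rw [habs hut]
      exact Real.rpow_le_rpow (by linarith) (by linarith) (by linarith)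
    calc ‖(fderiv ℝ F (U s) - fderiv ℝ F (U u)) (Γ t - Γ u)‖
        ≤ ‖fderiv ℝ F (U s) - fderiv ℝ F (U u)‖ * ‖Γ t - Γ u‖ := h1
      _ ≤ (M * (C₂ * (t - s) ^ α)) * (CU * (t - s) ^ (2*α)) :=
          mul_le_mul h2 h4 (norm_nonneg _)
            (mul_nonneg hM0 (mul_nonneg hC₂0 (Real.rpow_nonneg (by linarith) _)))
      _ = (M * C₂ * CU) * ((t-s) ^ α * (t-s) ^ (2*α)) := by ring
      _ = (M * C₂ * CU) * (t - s) ^ (3*α) := by rw [← h3αsplit _ (by linarith)]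
  obtain ⟨g₂, K₂, hK₂0, hg₂⟩ := sewing T (3*α) (M * C₂ * CU) hT hθ (by positivity) A2 hδ2
  -- coherence of the germ A3
  set CB : ℝ := CX * CX + 2 * CX with hCBdef
  have hCB0 : 0 ≤ CB := by positivity
  have hbrktH : ∀ s ∈ Icc (0:ℝ) T, ∀ t ∈ Icc (0:ℝ) T, ∀ i j,
      |(((X t i - X 0 i) * (X t j - X 0 j) - (XX 0 t i j + XX 0 t j i)) -
        ((X s i - X 0 i) * (X s j - X 0 j) - (XX 0 s i j + XX 0 s j i)))|
        ≤ CB * |t - s| ^ (2*α) := by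
    intro s hs t ht i j
    rw [hbrkt s hs t ht i j]
    have h1 : |X t i - X s i| ≤ CX * |t-s|^α := (hXcomp s t i).trans (hX s hs t ht)
    have h2 : |X t j - X s j| ≤ CX * |t-s|^α := (hXcomp s t j).trans (hX s hs t ht)
    have h3 := hXX s hs t ht i j
    have h4 := hXX s hs t ht j i
    have h5 : |(X t i - X s i) * (X t j - X s j)| ≤ (CX*CX) * |t-s|^(2*α) := by
      rw [abs_mul, h2αsplit _ (abs_nonneg _)]
      calc |X t i - X s i| * |X t j - X s j|
          ≤ (CX * |t-s|^α) * (CX * |t-s|^α) :=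
            mul_le_mul h1 h2 (abs_nonneg _) (by positivity)
        _ = CX * CX * (|t-s|^α * |t-s|^α) := by ring
    set a := (X t i - X s i) * (X t j - X s j)
    set b := XX s t i j
    set c := XX s t j i
    calc |a - b - c| = |a + -b + -c| := by ring_nf
      _ ≤ |a + -b| + |-c| := abs_add_le _ _
      _ ≤ (|a| + |-b|) + |-c| := add_le_add_left (abs_add_le _ _) _
      _ = |a| + |b| + |c| := by rw [abs_neg, abs_neg]
      _ ≤ (CX*CX) * |t-s|^(2*α) + CX * |t-s|^(2*α) + CX * |t-s|^(2*α) :=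
          add_le_add (add_le_add h5 h3) h4
      _ = CB * |t-s|^(2*α) := by rw [hCBdef]; ring
  set Cδ₃ : ℝ := (d:ℝ) * (d:ℝ) * (CB * CW) with hCδ₃def
  have hδ3 : ∀ s u t : ℝ, 0 ≤ s → s ≤ u → u ≤ t → t ≤ T →
      ‖A3 s t - A3 s u - A3 u t‖ ≤ Cδ₃ * (t - s) ^ (3*α) := by
    intro s u t h0s hsu hut htT
    have hs : s ∈ Icc (0:ℝ) T := ⟨h0s, by linarith⟩
    have hu : u ∈ Icc (0:ℝ) T := ⟨by linarith, by linarith⟩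
    have ht : t ∈ Icc (0:ℝ) T := ⟨by linarith, htT⟩
    have he : A3 s t - A3 s u - A3 u t = ∑ i : Fin d, ∑ j : Fin d,
        (((X t i - X 0 i) * (X t j - X 0 j) - (XX 0 t i j + XX 0 t j i)) -
          ((X u i - X 0 i) * (X u j - X 0 j) - (XX 0 u i j + XX 0 u j i)))
          • (Wf s i j - Wf u i j) := by
      rw [hA3def]
      simp only [← Finset.sum_sub_distrib]
      refine Finset.sum_congr rfl fun i _ => Finset.sum_congr rfl fun j _ => ?_
      rw [smul_sub, sub_smul, sub_smul, sub_smul]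
      module
    rw [he]
    have hterm : ∀ i j : Fin d,
        ‖(((X t i - X 0 i) * (X t j - X 0 j) - (XX 0 t i j + XX 0 t j i)) -
          ((X u i - X 0 i) * (X u j - X 0 j) - (XX 0 u i j + XX 0 u j i)))
          • (Wf s i j - Wf u i j)‖ ≤ (CB * CW) * (t - s) ^ (3*α) := by
      intro i j
      rw [norm_smul, Real.norm_eq_abs]
      have h1 : |(((X t i - X 0 i) * (X t j - X 0 j) - (XX 0 t i j + XX 0 t j i)) -
          ((X u i - X 0 i) * (X u j - X 0 j) - (XX 0 u i j + XX 0 u j i)))|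
          ≤ CB * (t - s) ^ (2*α) := by
        refine (hbrktH u hu t ht i j).trans (mul_le_mul_of_nonneg_left ?_ hCB0)
        rw [habs hut]
        exact Real.rpow_le_rpow (by linarith) (by linarith) (by linarith)
      have h2 : ‖Wf s i j - Wf u i j‖ ≤ CW * (t - s) ^ α := by
        refine (hWH s hs u hu i j).trans (mul_le_mul_of_nonneg_left ?_ hCW0)
        rw [habs hsu]
        exact Real.rpow_le_rpow (by linarith) (by linarith) hα0.le
      calc |_| * ‖Wf s i j - Wf u i j‖
          ≤ (CB * (t - s) ^ (2*α)) * (CW * (t - s) ^ α) :=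
            mul_le_mul h1 h2 (norm_nonneg _)
              (mul_nonneg hCB0 (Real.rpow_nonneg (by linarith) _))
        _ = (CB * CW) * ((t-s) ^ α * (t-s) ^ (2*α)) := by ring
        _ = (CB * CW) * (t - s) ^ (3*α) := by rw [← h3αsplit _ (by linarith)]
    calc ‖∑ i : Fin d, ∑ j : Fin d,
        (((X t i - X 0 i) * (X t j - X 0 j) - (XX 0 t i j + XX 0 t j i)) -
          ((X u i - X 0 i) * (X u j - X 0 j) - (XX 0 u i j + XX 0 u j i)))
          • (Wf s i j - Wf u i j)‖
        ≤ ∑ i : Fin d, ‖∑ j : Fin d,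
          (((X t i - X 0 i) * (X t j - X 0 j) - (XX 0 t i j + XX 0 t j i)) -
          ((X u i - X 0 i) * (X u j - X 0 j) - (XX 0 u i j + XX 0 u j i)))
          • (Wf s i j - Wf u i j)‖ := norm_sum_le _ _
      _ ≤ ∑ _i : Fin d, ((d:ℝ) * ((CB * CW) * (t - s) ^ (3*α))) := by
          refine Finset.sum_le_sum fun i _ => ?_
          refine (norm_sum_le _ _).trans ?_
          calc (∑ j : Fin d, ‖(((X t i - X 0 i) * (X t j - X 0 j) - (XX 0 t i j + XX 0 t j i)) -
              ((X u i - X 0 i) * (X u j - X 0 j) - (XX 0 u i j + XX 0 u j i)))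
              • (Wf s i j - Wf u i j)‖)
              ≤ ∑ _j : Fin d, ((CB * CW) * (t - s) ^ (3*α)) :=
                Finset.sum_le_sum fun j _ => hterm i j
            _ = (d:ℝ) * ((CB * CW) * (t - s) ^ (3*α)) := by
                rw [Finset.sum_const, Finset.card_univ, Fintype.card_fin, nsmul_eq_mul]
      _ = Cδ₃ * (t - s) ^ (3*α) := by
          rw [Finset.sum_const, Finset.card_univ, Fintype.card_fin, nsmul_eq_mul, hCδ₃def]
          ring
  obtain ⟨g₃, K₃, hK₃0, hg₃⟩ := sewing T (3*α) Cδ₃ hT hθ (by positivity) A3 hδ3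
  -- the integrals
  set C : ℝ := K₂ + K₃ + M * CU + M * (C₂*C₂*C₂) + M * (C₂ + B' * CX) * CU with hCdef
  have hKC₂ : K₂ ≤ C ∧ K₃ ≤ C := by
    have n1 : 0 ≤ M * CU := by positivity
    have n2 : 0 ≤ M * (C₂*C₂*C₂) := by positivity
    have n3 : 0 ≤ M * (C₂ + B' * CX) * CU := by positivity
    constructor <;> (rw [hCdef]; linarith)
  refine ⟨fun s t => (F (U t) - F (U s)) - (g₂ t - g₂ s) - (1/2:ℝ) • (g₃ t - g₃ s),
    fun s t => g₂ t - g₂ s, fun s t => g₃ t - g₃ s, C, ?_, ?_, ?_, ?_, ?_⟩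
  · -- additivity
    intro s _ u _ t _
    refine ⟨?_, ?_, ?_⟩
    · show ((F (U u) - F (U s)) - (g₂ u - g₂ s) - (1/2:ℝ) • (g₃ u - g₃ s))
        + ((F (U t) - F (U u)) - (g₂ t - g₂ u) - (1/2:ℝ) • (g₃ t - g₃ u))
        = (F (U t) - F (U s)) - (g₂ t - g₂ s) - (1/2:ℝ) • (g₃ t - g₃ s)
      module
    · show (g₂ u - g₂ s) + (g₂ t - g₂ u) = g₂ t - g₂ s
      abel
    · show (g₃ u - g₃ s) + (g₃ t - g₃ u) = g₃ t - g₃ s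
      abel
  · -- expansion of Z₁
    intro s hs t ht hst
    have h0s := hs.1
    have htT := ht.2
    have hts0 : (0:ℝ) ≤ t - s := by linarith
    have hpow3 : (0:ℝ) ≤ (t-s)^(3*α) := Real.rpow_nonneg hts0 _
    have hpowα : (0:ℝ) ≤ (t-s)^α := Real.rpow_nonneg hts0 _
    have hpow2α : (0:ℝ) ≤ (t-s)^(2*α) := Real.rpow_nonneg hts0 _
    -- Taylor remainder
    have hdUb : ‖U t - U s‖ ≤ C₂ * (t-s)^α := by
      have h := hUHol s hs t ht
      rwa [habs hst] at h
    have hRT : ‖F (U t) - F (U s) - fderiv ℝ F (U s) (U t - U s)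
        - (1/2:ℝ) • (fderiv ℝ (fderiv ℝ F) (U s) (U t - U s) (U t - U s))‖
        ≤ (M * (C₂*C₂*C₂)) * (t-s)^(3*α) := by
      refine (taylor2 F hF M hD3 (U s) (U t)).trans ?_
      have hn := norm_nonneg (U t - U s)
      have hc : 0 ≤ C₂ * (t-s)^α := mul_nonneg hC₂0 hpowα
      have h4 := hmul3 _ _ _ _ _ _ hn hn hn hc hc hdUb hdUb hdUb
      calc M * ‖U t - U s‖ * ‖U t - U s‖ * ‖U t - U s‖
          = M * (‖U t - U s‖ * ‖U t - U s‖ * ‖U t - U s‖) := by ring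
        _ ≤ M * ((C₂ * (t-s)^α) * (C₂ * (t-s)^α) * (C₂ * (t-s)^α)) :=
            mul_le_mul_of_nonneg_left h4 hM0
        _ = (M * (C₂*C₂*C₂)) * ((t-s)^α * (t-s)^α * (t-s)^α) := by ring
        _ = (M * (C₂*C₂*C₂)) * (t-s)^(3*α) := by rw [← h3αsplit' _ hts0]
    -- rough-integral remainder mapped through D F(U s)
    have hD1R : ‖fderiv ℝ F (U s) (U t - U s - (Γ t - Γ s) - U' s (X t - X s) -
        ∑ i : Fin d, ∑ j : Fin d, XX s t i j • U'' s (Pi.single i 1) (Pi.single j 1))‖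
        ≤ (M * CU) * (t-s)^(3*α) := by
      calc ‖fderiv ℝ F (U s) (U t - U s - (Γ t - Γ s) - U' s (X t - X s) -
          ∑ i : Fin d, ∑ j : Fin d, XX s t i j • U'' s (Pi.single i 1) (Pi.single j 1))‖
          ≤ ‖fderiv ℝ F (U s)‖ * ‖U t - U s - (Γ t - Γ s) - U' s (X t - X s) -
            ∑ i : Fin d, ∑ j : Fin d, XX s t i j • U'' s (Pi.single i 1) (Pi.single j 1)‖ :=
            (fderiv ℝ F (U s)).le_opNorm _
        _ ≤ M * (CU * (t-s)^(3*α)) :=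
            mul_le_mul (hD1 s hs) (hU s hs t ht hst) (norm_nonneg _) hM0
        _ = (M*CU) * (t-s)^(3*α) := by ring
    -- quadratic replacement
    have hdUV : ‖U t - U s - U' s (X t - X s)‖ ≤ CU * (t-s)^(2*α) := by
      have h := hctrl s hs t ht
      rwa [habs hst] at h
    have hVb : ‖U' s (X t - X s)‖ ≤ (B' * CX) * (t-s)^α := by
      have hXb : ‖X t - X s‖ ≤ CX * (t-s)^α := by
        have h := hX s hs t ht
        rwa [habs hst] at h
      calc ‖U' s (X t - X s)‖ ≤ ‖U' s‖ * ‖X t - X s‖ := (U' s).le_opNorm _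
        _ ≤ B' * (CX * (t-s)^α) :=
            mul_le_mul (hU'bd s hs) hXb (norm_nonneg _) hB'0
        _ = (B'*CX)*(t-s)^α := by ring
    have hRq : ‖fderiv ℝ (fderiv ℝ F) (U s) (U t - U s) (U t - U s)
        - fderiv ℝ (fderiv ℝ F) (U s) (U' s (X t - X s)) (U' s (X t - X s))‖
        ≤ (M * (C₂ + B' * CX) * CU) * (t-s)^(3*α) := by
      have hsplitQ : fderiv ℝ (fderiv ℝ F) (U s) (U t - U s) (U t - U s)
          - fderiv ℝ (fderiv ℝ F) (U s) (U' s (X t - X s)) (U' s (X t - X s))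
          = fderiv ℝ (fderiv ℝ F) (U s) (U t - U s - U' s (X t - X s)) (U t - U s)
            + fderiv ℝ (fderiv ℝ F) (U s) (U' s (X t - X s))
                (U t - U s - U' s (X t - X s)) := by
        simp only [map_sub, ContinuousLinearMap.sub_apply]
        abel
      rw [hsplitQ]
      have t1 : ‖fderiv ℝ (fderiv ℝ F) (U s) (U t - U s - U' s (X t - X s)) (U t - U s)‖
          ≤ M * (CU * (t-s)^(2*α)) * (C₂ * (t-s)^α) := by
        refine (htri _ _ _).trans ?_
        exact hmul3 _ _ _ _ _ _ (norm_nonneg (fderiv ℝ (fderiv ℝ F) (U s)))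
          (norm_nonneg (U t - U s - U' s (X t - X s))) (norm_nonneg (U t - U s))
          hM0 (by positivity) (hD2 (U s)) hdUV hdUb
      have t2 : ‖fderiv ℝ (fderiv ℝ F) (U s) (U' s (X t - X s))
          (U t - U s - U' s (X t - X s))‖
          ≤ M * ((B'*CX) * (t-s)^α) * (CU * (t-s)^(2*α)) := by
        refine (htri _ _ _).trans ?_
        exact hmul3 _ _ _ _ _ _ (norm_nonneg (fderiv ℝ (fderiv ℝ F) (U s)))
          (norm_nonneg (U' s (X t - X s))) (norm_nonneg (U t - U s - U' s (X t - X s)))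
          hM0 (by positivity) (hD2 (U s)) hVb hdUV
      refine (norm_add_le _ _).trans ?_
      have he3 : (t-s)^α * (t-s)^(2*α) = (t-s)^(3*α) := (h3αsplit _ hts0).symm
      calc ‖_‖ + ‖_‖ ≤ (M * (CU * (t-s)^(2*α)) * (C₂ * (t-s)^α))
            + (M * ((B'*CX) * (t-s)^α) * (CU * (t-s)^(2*α))) := add_le_add t1 t2
        _ = (M * (C₂ + B' * CX) * CU) * ((t-s)^α * (t-s)^(2*α)) := by ring
        _ = (M * (C₂ + B' * CX) * CU) * (t-s)^(3*α) := by rw [he3]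
    -- coordinate decompositions
    have hXdec : (X t - X s) = ∑ i : Fin d, (X t i - X s i) • (Pi.single i 1 : Fin d → ℝ) := by
      funext k
      simp only [Finset.sum_apply, Pi.smul_apply, Pi.single_apply, smul_eq_mul,
        mul_ite, mul_one, mul_zero, Pi.sub_apply]
      rw [Finset.sum_ite_eq Finset.univ k (fun i => X t i - X s i)]
      simp
    have hVdec : U' s (X t - X s) = ∑ i : Fin d, (X t i - X s i) • U' s (Pi.single i 1) := by
      conv_lhs => rw [hXdec]
      rw [map_sum]
      simp only [map_smul]
    have hQVV : fderiv ℝ (fderiv ℝ F) (U s) (U' s (X t - X s)) (U' s (X t - X s))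
        = ∑ i : Fin d, ∑ j : Fin d,
          ((X t i - X s i) * (X t j - X s j)) • Wf s i j := by
      rw [hVdec]
      simp only [map_sum, map_smul, ContinuousLinearMap.sum_apply,
        ContinuousLinearMap.smul_apply, Finset.smul_sum, smul_smul, hWdef]
      refine Finset.sum_congr rfl fun i _ => Finset.sum_congr rfl fun j _ => ?_
      rw [symB]
    -- bracket germ in terms of s,t
    have hswap : (∑ i : Fin d, ∑ j : Fin d, XX s t j i • Wf s i j)
        = ∑ i : Fin d, ∑ j : Fin d, XX s t i j • Wf s i j := by
      rw [Finset.sum_comm]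
      refine Finset.sum_congr rfl fun i _ => Finset.sum_congr rfl fun j _ => ?_
      rw [hWdef]
      simp only
      rw [symB]
    have hA3st : A3 s t = (∑ i : Fin d, ∑ j : Fin d,
          ((X t i - X s i) * (X t j - X s j)) • Wf s i j)
        - (∑ i : Fin d, ∑ j : Fin d, XX s t i j • Wf s i j)
        - (∑ i : Fin d, ∑ j : Fin d, XX s t i j • Wf s i j) := by
      rw [hA3def]
      simp only
      rw [show (∑ i : Fin d, ∑ j : Fin d,
          (((X t i - X 0 i) * (X t j - X 0 j) - (XX 0 t i j + XX 0 t j i)) -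
            ((X s i - X 0 i) * (X s j - X 0 j) - (XX 0 s i j + XX 0 s j i))) • Wf s i j)
          = ∑ i : Fin d, ∑ j : Fin d,
            (((X t i - X s i) * (X t j - X s j)) • Wf s i j
              - XX s t i j • Wf s i j - XX s t j i • Wf s i j) from
        Finset.sum_congr rfl fun i _ => Finset.sum_congr rfl fun j _ => by
          rw [hbrkt s hs t ht i j, sub_smul, sub_smul]]
      simp only [Finset.sum_sub_distrib]
      rw [hswap]
    -- splitting of the germ of Z₁
    have hSXX : (∑ i : Fin d, ∑ j : Fin d, XX s t i j •
          (fderiv ℝ (fderiv ℝ F) (U s) (U' s (Pi.single i 1)) (U' s (Pi.single j 1))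
            + fderiv ℝ F (U s) (U'' s (Pi.single i 1) (Pi.single j 1))))
        = (∑ i : Fin d, ∑ j : Fin d, XX s t i j • Wf s i j)
          + (∑ i : Fin d, ∑ j : Fin d, XX s t i j •
              fderiv ℝ F (U s) (U'' s (Pi.single i 1) (Pi.single j 1))) := by
      simp only [smul_add, Finset.sum_add_distrib, hWdef]
    have h1 : fderiv ℝ F (U s) (U t - U s - (Γ t - Γ s) - U' s (X t - X s) -
        ∑ i : Fin d, ∑ j : Fin d, XX s t i j • U'' s (Pi.single i 1) (Pi.single j 1))
        = fderiv ℝ F (U s) (U t - U s) - A2 s t - fderiv ℝ F (U s) (U' s (X t - X s))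
          - ∑ i : Fin d, ∑ j : Fin d, XX s t i j •
              fderiv ℝ F (U s) (U'' s (Pi.single i 1) (Pi.single j 1)) := by
      simp only [map_sub, map_sum, map_smul, hA2def]
    -- the algebraic identity
    show ‖(F (U t) - F (U s)) - (g₂ t - g₂ s) - (1/2:ℝ) • (g₃ t - g₃ s)
        - fderiv ℝ F (U s) (U' s (X t - X s))
        - ∑ i : Fin d, ∑ j : Fin d, XX s t i j •
            (fderiv ℝ (fderiv ℝ F) (U s) (U' s (Pi.single i 1)) (U' s (Pi.single j 1))
              + fderiv ℝ F (U s) (U'' s (Pi.single i 1) (Pi.single j 1)))‖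
      ≤ C * (t - s) ^ (3*α)
    have hiden : (F (U t) - F (U s)) - (g₂ t - g₂ s) - (1/2:ℝ) • (g₃ t - g₃ s)
        - fderiv ℝ F (U s) (U' s (X t - X s))
        - (∑ i : Fin d, ∑ j : Fin d, XX s t i j •
            (fderiv ℝ (fderiv ℝ F) (U s) (U' s (Pi.single i 1)) (U' s (Pi.single j 1))
              + fderiv ℝ F (U s) (U'' s (Pi.single i 1) (Pi.single j 1))))
        = (F (U t) - F (U s) - fderiv ℝ F (U s) (U t - U s)
            - (1/2:ℝ) • (fderiv ℝ (fderiv ℝ F) (U s) (U t - U s) (U t - U s)))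
          + fderiv ℝ F (U s) (U t - U s - (Γ t - Γ s) - U' s (X t - X s) -
              ∑ i : Fin d, ∑ j : Fin d, XX s t i j • U'' s (Pi.single i 1) (Pi.single j 1))
          + (1/2:ℝ) • (fderiv ℝ (fderiv ℝ F) (U s) (U t - U s) (U t - U s)
              - fderiv ℝ (fderiv ℝ F) (U s) (U' s (X t - X s)) (U' s (X t - X s)))
          + (A2 s t - (g₂ t - g₂ s))
          + (1/2:ℝ) • (A3 s t - (g₃ t - g₃ s)) := by
      rw [h1, hSXX, hQVV, hA3st]
      module
    rw [hiden]
    -- norm estimates of the five pieces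
    have hE2 : ‖A2 s t - (g₂ t - g₂ s)‖ ≤ K₂ * (t-s)^(3*α) := by
      rw [norm_sub_rev]
      exact hg₂ s t h0s hst htT
    have hE3 : ‖(1/2:ℝ) • (A3 s t - (g₃ t - g₃ s))‖ ≤ K₃ * (t-s)^(3*α) := by
      rw [norm_smul, Real.norm_eq_abs]
      have h := hg₃ s t h0s hst htT
      rw [norm_sub_rev] at h
      calc |(1/2:ℝ)| * ‖A3 s t - (g₃ t - g₃ s)‖ ≤ 1 * (K₃ * (t-s)^(3*α)) := by
            refine mul_le_mul (by rw [abs_of_pos]; norm_num; norm_num) h (norm_nonneg _)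
              zero_le_one
        _ = K₃ * (t-s)^(3*α) := one_mul _
    have hRq' : ‖(1/2:ℝ) • (fderiv ℝ (fderiv ℝ F) (U s) (U t - U s) (U t - U s)
        - fderiv ℝ (fderiv ℝ F) (U s) (U' s (X t - X s)) (U' s (X t - X s)))‖
        ≤ (M * (C₂ + B' * CX) * CU) * (t-s)^(3*α) := by
      rw [norm_smul, Real.norm_eq_abs]
      calc |(1/2:ℝ)| * ‖_‖ ≤ 1 * ((M * (C₂ + B' * CX) * CU) * (t-s)^(3*α)) := by
            refine mul_le_mul (by rw [abs_of_pos]; norm_num; norm_num) hRq (norm_nonneg _)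
              zero_le_one
        _ = (M * (C₂ + B' * CX) * CU) * (t-s)^(3*α) := one_mul _
    calc ‖_ + _ + _ + _ + _‖
        ≤ ‖_ + _ + _ + _‖ + ‖_‖ := norm_add_le _ _
      _ ≤ (‖_ + _ + _‖ + ‖_‖) + ‖_‖ := add_le_add_left (norm_add_le _ _) _
      _ ≤ ((‖_ + _‖ + ‖_‖) + ‖_‖) + ‖_‖ :=
          add_le_add_left (add_le_add_left (norm_add_le _ _) _) _
      _ ≤ (((‖_‖ + ‖_‖) + ‖_‖) + ‖_‖) + ‖_‖ :=
          add_le_add_left (add_le_add_left (add_le_add_left (norm_add_le _ _) _) _) _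
      _ ≤ ((((M * (C₂*C₂*C₂)) * (t-s)^(3*α) + (M*CU) * (t-s)^(3*α))
            + (M * (C₂ + B' * CX) * CU) * (t-s)^(3*α))
            + K₂ * (t-s)^(3*α)) + K₃ * (t-s)^(3*α) :=
          add_le_add (add_le_add (add_le_add (add_le_add hRT hD1R) hRq') hE2) hE3
      _ = C * (t - s) ^ (3*α) := by rw [hCdef]; ring
  · -- Z₂ expansion
    intro s hs t ht hst
    show ‖(g₂ t - g₂ s) - fderiv ℝ F (U s) (Γ t - Γ s)‖ ≤ C * (t - s) ^ (3*α)
    have h := hg₂ s t hs.1 hst ht.2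
    refine le_trans (le_of_eq ?_) (h.trans ?_)
    · rfl
    · exact mul_le_mul_of_nonneg_right hKC₂.1 (Real.rpow_nonneg (by linarith) _)
  · -- Z₃ expansion
    intro s hs t ht hst
    have h := hg₃ s t hs.1 hst ht.2
    refine le_trans (le_of_eq ?_) (h.trans ?_)
    · rfl
    · exact mul_le_mul_of_nonneg_right hKC₂.2 (Real.rpow_nonneg (by linarith) _)
  · -- the rough Itô formula
    intro t _
    show F (U t) = F (U 0)
      + ((F (U t) - F (U 0)) - (g₂ t - g₂ 0) - (1/2:ℝ) • (g₃ t - g₃ 0))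
      + (g₂ t - g₂ 0) + (1/2:ℝ) • (g₃ t - g₃ 0)
    module
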